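/- arXiv:math/0702419 — 3 statements merged into one kernel-verified Lean document; each statement's English description precedes it below -/
import Mathlib

section
/- Under Assumption A with k > 0, the Markov chain X_t = (ε_t², ε_{t-1}²) is geometrically ergodic: there is a (unique) invariant probability measure π for the kernel P(x, B) = P[(ψ(x₁,x₂)·η², x₁) ∈ B] and a constant ρ ∈ (0,1) such that for every x ∈ [0,∞)², ρ^{−t}·‖P^t(x, ·) − π‖ → 0 as t → ∞, where ‖·‖ is the total variation norm and P^t denotes the t-step transition probability. -/
open MeasureTheory ProbabilityTheory Set Filter
open scoped ENNReal

private lemma avg_le {α : Type*} [MeasurableSpace α] {Q : Set α} {μ ν : Measure α}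
    (hμ1 : μ Set.univ = 1) (hν1 : ν Set.univ = 1) (hμQ : μ Qᶜ = 0) (hνQ : ν Qᶜ = 0)
    {G : α → ℝ≥0∞} {δ : ℝ≥0∞} (hG : ∀ u ∈ Q, ∀ v ∈ Q, G u ≤ G v + δ) :
    ∫⁻ u, G u ∂μ ≤ (∫⁻ u, G u ∂ν) + δ := by
  have hνae : ∀ᵐ v ∂ν, v ∈ Q := by
    rw [MeasureTheory.ae_iff]; simpa [compl_def] using hνQ
  have hμae : ∀ᵐ u ∂μ, u ∈ Q := by
    rw [MeasureTheory.ae_iff]; simpa [compl_def] using hμQ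
  have key : ∀ u ∈ Q, G u ≤ (∫⁻ v, G v ∂ν) + δ := by
    intro u hu
    calc G u = ∫⁻ _, G u ∂ν := by rw [lintegral_const, hν1, mul_one]
    _ ≤ ∫⁻ v, G v + δ ∂ν := lintegral_mono_ae (hνae.mono fun v hv => hG u hu v hv)
    _ = (∫⁻ v, G v ∂ν) + δ := by
        rw [lintegral_add_right _ measurable_const, lintegral_const, hν1, mul_one]
  calc ∫⁻ u, G u ∂μ ≤ ∫⁻ _, (∫⁻ v, G v ∂ν) + δ ∂μ :=
        lintegral_mono_ae (hμae.mono fun u hu => key u hu)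
  _ = (∫⁻ v, G v ∂ν) + δ := by rw [lintegral_const, hμ1, mul_one]

private lemma block_le {α : Type*} [MeasurableSpace α] {Q : Set α} {μ ν μ₀ : Measure α}
    [IsFiniteMeasure μ₀]
    (hμ1 : μ Set.univ = 1) (hν1 : ν Set.univ = 1) (hμQ : μ Qᶜ = 0) (hνQ : ν Qᶜ = 0)
    (h0μ : μ₀ ≤ μ) (h0ν : μ₀ ≤ ν) {d : ℝ≥0∞} (hd : μ₀ Set.univ + d = 1) (hd0 : d ≠ 0)
    {G : α → ℝ≥0∞} {δ : ℝ≥0∞} (hG : ∀ u ∈ Q, ∀ v ∈ Q, G u ≤ G v + δ) :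
    ∫⁻ u, G u ∂μ ≤ (∫⁻ u, G u ∂ν) + δ * d := by
  have hdt : d ≠ ∞ := by
    intro h; rw [h] at hd; simp [ENNReal.add_eq_top] at hd
  set μ' := μ - μ₀ with hμ'def
  set ν' := ν - μ₀ with hν'def
  have hμ'add : μ' + μ₀ = μ := Measure.sub_add_cancel_of_le h0μ
  have hν'add : ν' + μ₀ = ν := Measure.sub_add_cancel_of_le h0ν
  have h2 : μ₀ Set.univ ≠ ∞ := measure_ne_top _ _
  have hμ'univ : μ' Set.univ = d := by
    rw [hμ'def, Measure.sub_apply MeasurableSet.univ h0μ, hμ1, ← hd,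
      ENNReal.add_sub_cancel_left h2]
  have hν'univ : ν' Set.univ = d := by
    rw [hν'def, Measure.sub_apply MeasurableSet.univ h0ν, hν1, ← hd,
      ENNReal.add_sub_cancel_left h2]
  have hμ'Q : μ' Qᶜ = 0 :=
    le_antisymm (le_trans (Measure.le_iff'.mp Measure.sub_le Qᶜ) hμQ.le) zero_le
  have hν'Q : ν' Qᶜ = 0 :=
    le_antisymm (le_trans (Measure.le_iff'.mp Measure.sub_le Qᶜ) hνQ.le) zero_le
  have hμ'ae : ∀ᵐ u ∂μ', u ∈ Q := by
    rw [MeasureTheory.ae_iff]; simpa [compl_def] using hμ'Q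
  have hν'ae : ∀ᵐ v ∂ν', v ∈ Q := by
    rw [MeasureTheory.ae_iff]; simpa [compl_def] using hν'Q
  have key1 : ∀ u ∈ Q, d * G u ≤ (∫⁻ v, G v ∂ν') + δ * d := by
    intro u hu
    calc d * G u = ∫⁻ _, G u ∂ν' := by rw [lintegral_const, hν'univ, mul_comm]
    _ ≤ ∫⁻ v, G v + δ ∂ν' := lintegral_mono_ae (hν'ae.mono fun v hv => hG u hu v hv)
    _ = (∫⁻ v, G v ∂ν') + δ * d := by
        rw [lintegral_add_right _ measurable_const, lintegral_const, hν'univ]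
  have key2 : ∫⁻ u, G u ∂μ' ≤ (∫⁻ v, G v ∂ν') + δ * d := by
    have h3 : d * ∫⁻ u, G u ∂μ' ≤ d * ((∫⁻ v, G v ∂ν') + δ * d) := by
      calc d * ∫⁻ u, G u ∂μ' = ∫⁻ u, d * G u ∂μ' := (lintegral_const_mul' d _ hdt).symm
      _ ≤ ∫⁻ _, (∫⁻ v, G v ∂ν') + δ * d ∂μ' :=
          lintegral_mono_ae (hμ'ae.mono fun u hu => key1 u hu)
      _ = ((∫⁻ v, G v ∂ν') + δ * d) * d := by rw [lintegral_const, hμ'univ]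
      _ = d * ((∫⁻ v, G v ∂ν') + δ * d) := mul_comm _ _
    exact (ENNReal.mul_le_mul_iff_right hd0 hdt).mp h3
  calc ∫⁻ u, G u ∂μ = ∫⁻ u, G u ∂μ' + ∫⁻ u, G u ∂μ₀ := by
        rw [← hμ'add]; exact lintegral_add_measure _ _ _
  _ ≤ ((∫⁻ v, G v ∂ν') + δ * d) + ∫⁻ u, G u ∂μ₀ := add_le_add_left key2 _
  _ = ((∫⁻ v, G v ∂ν') + ∫⁻ u, G u ∂μ₀) + δ * d := by ring
  _ = (∫⁻ u, G u ∂ν) + δ * d := by rw [← lintegral_add_measure, hν'add]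
set_option linter.unusedSectionVars false

section Chain

variable {Ω' : Type*} [MeasurableSpace Ω'] {P : Measure Ω'} [IsProbabilityMeasure P]
  {ω α k : ℝ} {ψ : ℝ → ℝ → ℝ} {η : Ω' → ℝ}
  {P1 : ℝ × ℝ → Measure (ℝ × ℝ)} {Pt : ℕ → ℝ × ℝ → Measure (ℝ × ℝ)}

private lemma psi_meas (hψ : ∀ x₁ x₂, ψ x₁ x₂ = ω + α * x₁ * (if k * x₂ < x₁ then 1 else 0)) :
    Measurable fun x : ℝ × ℝ => ψ x.1 x.2 := by
  have h : (fun x : ℝ × ℝ => ψ x.1 x.2)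
      = fun x : ℝ × ℝ => ω + α * x.1 * (if k * x.2 < x.1 then 1 else 0) :=
    funext fun x => hψ _ _
  rw [h]
  exact measurable_const.add ((measurable_const.mul measurable_fst).mul
    (Measurable.ite (measurableSet_lt (measurable_const.mul measurable_snd) measurable_fst)
      measurable_const measurable_const))

private lemma psi_ge (hψ : ∀ x₁ x₂, ψ x₁ x₂ = ω + α * x₁ * (if k * x₂ < x₁ then 1 else 0))
    (hα : 0 ≤ α) (x : ℝ × ℝ) (hx : 0 ≤ x.1) : ω ≤ ψ x.1 x.2 := by
  rw [hψ]; split <;> nlinarith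

private lemma psi_le (hψ : ∀ x₁ x₂, ψ x₁ x₂ = ω + α * x₁ * (if k * x₂ < x₁ then 1 else 0))
    (hα : 0 ≤ α) (x : ℝ × ℝ) (hx : 0 ≤ x.1) : ψ x.1 x.2 ≤ ω + α * x.1 := by
  rw [hψ]; split <;> nlinarith

private lemma psi_off (hψ : ∀ x₁ x₂, ψ x₁ x₂ = ω + α * x₁ * (if k * x₂ < x₁ then 1 else 0))
    (x : ℝ × ℝ) (hoff : x.1 ≤ k * x.2) : ψ x.1 x.2 = ω := by
  rw [hψ, if_neg (not_lt.mpr hoff)]; ring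

private lemma st_meas (hψ : ∀ x₁ x₂, ψ x₁ x₂ = ω + α * x₁ * (if k * x₂ < x₁ then 1 else 0))
    (hη : Measurable η) :
    Measurable fun p : (ℝ × ℝ) × Ω' => (ψ p.1.1 p.1.2 * η p.2 ^ 2, p.1.1) :=
  (((psi_meas hψ).comp measurable_fst).mul
    ((hη.comp measurable_snd).pow_const 2)).prodMk (measurable_fst.comp measurable_fst)

private lemma st_meas1 (hη : Measurable η) (x : ℝ × ℝ) :
    Measurable fun z : Ω' => (ψ x.1 x.2 * η z ^ 2, x.1) :=
  (measurable_const.mul (hη.pow_const 2)).prodMk measurable_const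

private lemma P1_meas
    (hψ : ∀ x₁ x₂, ψ x₁ x₂ = ω + α * x₁ * (if k * x₂ < x₁ then 1 else 0))
    (hη : Measurable η)
    (hP1 : ∀ x, P1 x = Measure.map (fun z => (ψ x.1 x.2 * (η z) ^ 2, x.1)) P) :
    Measurable P1 := by
  apply Measure.measurable_measure.mpr
  intro s hs
  have h : (fun x => P1 x s)
      = fun x : ℝ × ℝ => P (Prod.mk x ⁻¹'
        ((fun p : (ℝ × ℝ) × Ω' => (ψ p.1.1 p.1.2 * η p.2 ^ 2, p.1.1)) ⁻¹' s)) := by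
    funext x
    rw [hP1 x, Measure.map_apply (st_meas1 hη x) hs]
    rfl
  rw [h]
  exact measurable_measure_prodMk_left ((st_meas hψ hη) hs)

private lemma P1_prob (hη : Measurable η)
    (hP1 : ∀ x, P1 x = Measure.map (fun z => (ψ x.1 x.2 * (η z) ^ 2, x.1)) P) (x : ℝ × ℝ) :
    IsProbabilityMeasure (P1 x) := by
  rw [hP1 x]; exact Measure.isProbabilityMeasure_map (st_meas1 hη x).aemeasurable

private lemma QQ_meas : MeasurableSet (Ici (0 : ℝ) ×ˢ Ici (0 : ℝ)) :=
  measurableSet_Ici.prod measurableSet_Ici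

private lemma P1_Q
    (hψ : ∀ x₁ x₂, ψ x₁ x₂ = ω + α * x₁ * (if k * x₂ < x₁ then 1 else 0))
    (hω : 0 < ω) (hα : 0 ≤ α) (hη : Measurable η)
    (hP1 : ∀ x, P1 x = Measure.map (fun z => (ψ x.1 x.2 * (η z) ^ 2, x.1)) P)
    (x : ℝ × ℝ) (hx : 0 ≤ x.1) : P1 x (Ici (0 : ℝ) ×ˢ Ici (0 : ℝ))ᶜ = 0 := by
  rw [hP1 x, Measure.map_apply (st_meas1 hη x) QQ_meas.compl]
  convert measure_empty
  · ext z
    simp only [mem_preimage, mem_compl_iff, mem_empty_iff_false, iff_false, not_not,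
      Set.mem_prod, mem_Ici]
    constructor
    · exact mul_nonneg (le_trans hω.le (psi_ge hψ hα x hx)) (sq_nonneg _)
    · exact hx
  · infer_instance

private lemma Pt_meas
    (hψ : ∀ x₁ x₂, ψ x₁ x₂ = ω + α * x₁ * (if k * x₂ < x₁ then 1 else 0))
    (hη : Measurable η)
    (hP1 : ∀ x, P1 x = Measure.map (fun z => (ψ x.1 x.2 * (η z) ^ 2, x.1)) P)
    (hPt1 : ∀ x, Pt 1 x = P1 x)
    (hPtsucc : ∀ t x, Pt (t + 1) x = (Pt t x).bind P1) :
    ∀ t, Measurable (Pt (t + 1)) := by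
  intro t
  induction t with
  | zero =>
    have : Pt 1 = P1 := funext hPt1
    rw [this]; exact P1_meas hψ hη hP1
  | succ n ih =>
    have : Pt (n + 2) = (fun m : Measure (ℝ × ℝ) => m.bind P1) ∘ Pt (n + 1) :=
      funext fun x => hPtsucc (n + 1) x
    rw [this]
    exact (Measure.measurable_bind' (P1_meas hψ hη hP1)).comp ih

private lemma Pt_prob (hη : Measurable η)
    (hP1 : ∀ x, P1 x = Measure.map (fun z => (ψ x.1 x.2 * (η z) ^ 2, x.1)) P)
    (hPt1 : ∀ x, Pt 1 x = P1 x)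
    (hPtsucc : ∀ t x, Pt (t + 1) x = (Pt t x).bind P1)
    (hψ : ∀ x₁ x₂, ψ x₁ x₂ = ω + α * x₁ * (if k * x₂ < x₁ then 1 else 0)) :
    ∀ t x, IsProbabilityMeasure (Pt (t + 1) x) := by
  intro t
  induction t with
  | zero => intro x; rw [hPt1 x]; exact P1_prob hη hP1 x
  | succ n ih =>
    intro x
    constructor
    rw [hPtsucc (n + 1) x, Measure.bind_apply MeasurableSet.univ (P1_meas hψ hη hP1).aemeasurable]
    have : ∀ y : ℝ × ℝ, P1 y Set.univ = 1 := fun y => (P1_prob hη hP1 y).measure_univ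
    simp only [this]
    haveI := ih x
    rw [lintegral_one, measure_univ]

private lemma Pt_Q
    (hψ : ∀ x₁ x₂, ψ x₁ x₂ = ω + α * x₁ * (if k * x₂ < x₁ then 1 else 0))
    (hω : 0 < ω) (hα : 0 ≤ α) (hη : Measurable η)
    (hP1 : ∀ x, P1 x = Measure.map (fun z => (ψ x.1 x.2 * (η z) ^ 2, x.1)) P)
    (hPt1 : ∀ x, Pt 1 x = P1 x)
    (hPtsucc : ∀ t x, Pt (t + 1) x = (Pt t x).bind P1) :
    ∀ t (x : ℝ × ℝ), 0 ≤ x.1 → Pt (t + 1) x (Ici (0 : ℝ) ×ˢ Ici (0 : ℝ))ᶜ = 0 := by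
  intro t
  induction t with
  | zero => intro x hx; rw [hPt1 x]; exact P1_Q hψ hω hα hη hP1 x hx
  | succ n ih =>
    intro x hx
    rw [hPtsucc (n + 1) x, Measure.bind_apply QQ_meas.compl (P1_meas hψ hη hP1).aemeasurable]
    have hae : ∀ᵐ y ∂(Pt (n + 1) x), y ∈ Ici (0 : ℝ) ×ˢ Ici (0 : ℝ) := by
      rw [MeasureTheory.ae_iff]
      simpa [compl_def] using ih x hx
    have : ∀ᵐ y ∂(Pt (n + 1) x), P1 y (Ici (0 : ℝ) ×ˢ Ici (0 : ℝ))ᶜ = 0 :=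
      hae.mono fun y hy => P1_Q hψ hω hα hη hP1 y hy.1
    rw [lintegral_congr_ae this, lintegral_zero]

private lemma Pt_add
    (hψ : ∀ x₁ x₂, ψ x₁ x₂ = ω + α * x₁ * (if k * x₂ < x₁ then 1 else 0))
    (hη : Measurable η)
    (hP1 : ∀ x, P1 x = Measure.map (fun z => (ψ x.1 x.2 * (η z) ^ 2, x.1)) P)
    (hPt1 : ∀ x, Pt 1 x = P1 x)
    (hPtsucc : ∀ t x, Pt (t + 1) x = (Pt t x).bind P1) :
    ∀ b a (x : ℝ × ℝ), Pt (a + (b + 1)) x = (Pt a x).bind (Pt (b + 1)) := by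
  intro b
  induction b with
  | zero =>
    intro a x
    rw [hPtsucc a x]
    congr 1
    exact (funext hPt1).symm
  | succ n ih =>
    intro a x
    have h1 : a + (n + 1 + 1) = (a + (n + 1)) + 1 := by ring
    rw [h1, hPtsucc (a + (n + 1)) x, ih a x,
      Measure.bind_bind (Pt_meas hψ hη hP1 hPt1 hPtsucc n).aemeasurable (P1_meas hψ hη hP1).aemeasurable]
    congr 1
    funext y
    exact (hPtsucc (n + 1) y).symm

private lemma st_lint
    (hψ : ∀ x₁ x₂, ψ x₁ x₂ = ω + α * x₁ * (if k * x₂ < x₁ then 1 else 0))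
    (hη : Measurable η)
    (hP1 : ∀ x, P1 x = Measure.map (fun z => (ψ x.1 x.2 * (η z) ^ 2, x.1)) P)
    (hPt1 : ∀ x, Pt 1 x = P1 x)
    (hPtsucc : ∀ t x, Pt (t + 1) x = (Pt t x).bind P1)
    (m : ℕ) (y : ℝ × ℝ) {A : Set (ℝ × ℝ)} (hA : MeasurableSet A) :
    Pt (m + 2) y A = ∫⁻ z, Pt (m + 1) (ψ y.1 y.2 * η z ^ 2, y.1) A ∂P := by
  have h1 : (m + 2 : ℕ) = 1 + (m + 1) := by ring
  rw [h1, Pt_add hψ hη hP1 hPt1 hPtsucc m 1 y,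
    Measure.bind_apply hA (Pt_meas hψ hη hP1 hPt1 hPtsucc m).aemeasurable, hPt1 y, hP1 y]
  exact lintegral_map ((Measure.measurable_coe hA).comp (Pt_meas hψ hη hP1 hPt1 hPtsucc m))
    (st_meas1 hη y)


private lemma ev_pos {f : ℝ → ℝ≥0∞} (hη : Measurable η) (hf : Measurable f)
    (hfpos : ∀ x, 0 ≤ x → 0 < f x)
    (hd : Measure.map (fun z => (η z) ^ 2) P = (volume.restrict (Ici (0 : ℝ))).withDensity f)
    {S : Set ℝ} (hS : MeasurableSet S) (hS0 : S ⊆ Ici 0) (hSv : 0 < volume S) :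
    0 < P {z | η z ^ 2 ∈ S} := by
  have h1 : P {z | η z ^ 2 ∈ S} = Measure.map (fun z => η z ^ 2) P S := by
    rw [Measure.map_apply (hη.pow_const 2) hS]; rfl
  rw [h1, hd, withDensity_apply _ hS, Measure.restrict_restrict hS,
    inter_eq_self_of_subset_left hS0]
  by_contra h
  push_neg at h
  have h0 : ∫⁻ x, f x ∂(volume.restrict S) = 0 := le_antisymm h zero_le
  rw [lintegral_eq_zero_iff hf] at h0
  have h2 : ∀ᵐ x ∂(volume.restrict S), False := by
    have hae : ∀ᵐ x ∂(volume.restrict S), x ∈ S := ae_restrict_mem hS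
    filter_upwards [h0, hae] with x hx hxS
    exact absurd hx (ne_of_gt (hfpos x (hS0 hxS)))
  rw [ae_iff] at h2
  simp only [not_false_eq_true, setOf_true] at h2
  rw [Measure.restrict_apply_univ] at h2
  exact absurd h2 (ne_of_gt hSv)

private lemma minor
    (hω : 0 < ω) (hα : 0 ≤ α) (hk : 0 < k)
    (hψ : ∀ x₁ x₂, ψ x₁ x₂ = ω + α * x₁ * (if k * x₂ < x₁ then 1 else 0))
    (hη : Measurable η) {f : ℝ → ℝ≥0∞} (hf : Measurable f)
    (hfpos : ∀ x, 0 ≤ x → 0 < f x)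
    (hd : Measure.map (fun z => (η z) ^ 2) P = (volume.restrict (Ici (0 : ℝ))).withDensity f)
    (hP1 : ∀ x, P1 x = Measure.map (fun z => (ψ x.1 x.2 * (η z) ^ 2, x.1)) P)
    (hPt1 : ∀ x, Pt 1 x = P1 x)
    (hPtsucc : ∀ t x, Pt (t + 1) x = (Pt t x).bind P1) :
    ∃ μ₀ : Measure (ℝ × ℝ), μ₀ Set.univ < 1 ∧ 0 < μ₀ Set.univ ∧
      ∀ x ∈ Ici (0 : ℝ) ×ˢ Ici (0 : ℝ), μ₀ ≤ Pt 4 x := by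
  have hD : 0 < ω + α * ω := by nlinarith
  set gw : ℝ := k * ω / (ω + α * ω) with hgwdef
  have hgw0 : 0 < gw := div_pos (mul_pos hk hω) hD
  set b : ℝ := gw / 2 with hbdef
  have hb0 : 0 < b := half_pos hgw0
  have hbgw : b < gw := half_lt_self hgw0
  set E1 : Set Ω' := {z | η z ^ 2 ∈ Ici (1 : ℝ)} with hE1def
  set E2 : Set Ω' := {z | η z ^ 2 ∈ Icc b gw} with hE2def
  set E3 : Set Ω' := {z | η z ^ 2 ∈ Icc 0 (k * b)} with hE3def
  have hE1m : MeasurableSet E1 := (hη.pow_const 2) measurableSet_Ici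
  have hE2m : MeasurableSet E2 := (hη.pow_const 2) measurableSet_Icc
  have hE3m : MeasurableSet E3 := (hη.pow_const 2) measurableSet_Icc
  set T : Ω' × Ω' → ℝ × ℝ := fun p => (ω * η p.2 ^ 2, ω * η p.1 ^ 2) with hTdef
  have hTm : Measurable T :=
    (measurable_const.mul ((hη.comp measurable_snd).pow_const 2)).prodMk
      (measurable_const.mul ((hη.comp measurable_fst).pow_const 2))
  set ν : Measure (ℝ × ℝ) := Measure.map T ((P.restrict E3).prod P) with hνdef
  have hνuniv : ν Set.univ = P E3 := by
    rw [hνdef, Measure.map_apply hTm MeasurableSet.univ, preimage_univ, ← univ_prod_univ,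
      Measure.prod_prod, Measure.restrict_apply_univ, measure_univ, mul_one]
  have hE1pos : 0 < P E1 :=
    ev_pos hη hf hfpos hd measurableSet_Ici (fun x hx => show (0:ℝ) ≤ x from le_trans zero_le_one hx)
      (by rw [Real.volume_Ici]; exact ENNReal.zero_lt_top)
  have hE2pos : 0 < P E2 :=
    ev_pos hη hf hfpos hd measurableSet_Icc (fun x hx => le_trans hb0.le hx.1)
      (by rw [Real.volume_Icc]; exact ENNReal.ofReal_pos.mpr (by linarith))
  have hE3pos : 0 < P E3 :=
    ev_pos hη hf hfpos hd measurableSet_Icc (fun x hx => hx.1)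
      (by rw [Real.volume_Icc]; exact ENNReal.ofReal_pos.mpr (by nlinarith))
  have hE1lt : P E1 < 1 := by
    have hsub : {z | η z ^ 2 ∈ Ico (0 : ℝ) 1} ⊆ E1ᶜ := by
      intro z hz
      simp only [hE1def, mem_compl_iff, mem_setOf_eq, mem_Ici]
      exact not_le.mpr hz.2
    have hpos : 0 < P E1ᶜ :=
      lt_of_lt_of_le (ev_pos hη hf hfpos hd measurableSet_Ico (fun x hx => hx.1)
        (by rw [Real.volume_Ico]; simpa using ENNReal.ofReal_pos.mpr one_pos))
        (measure_mono hsub)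
    have hcompl : P E1ᶜ = 1 - P E1 := prob_compl_eq_one_sub hE1m
    rw [hcompl] at hpos
    exact tsub_pos_iff_lt.mp hpos
  refine ⟨(P E1 * P E2) • ν, ?_, ?_, ?_⟩
  · rw [Measure.smul_apply, smul_eq_mul, hνuniv]
    calc P E1 * P E2 * P E3 ≤ P E1 * 1 * 1 := by
          gcongr <;> exact prob_le_one
    _ = P E1 := by ring
    _ < 1 := hE1lt
  · rw [Measure.smul_apply, smul_eq_mul, hνuniv]
    exact ENNReal.mul_pos (ENNReal.mul_pos hE1pos.ne' hE2pos.ne').ne' hE3pos.ne'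
  intro x hx
  rw [Measure.le_iff]
  intro A hA
  rw [Measure.smul_apply, smul_eq_mul]
  -- Step 2→4 chain of lower bounds
  have hνA : ∀ y : ℝ × ℝ, y.1 ≤ k * y.2 → ω * b ≤ y.1 → ν A ≤ Pt 2 y A := by
    intro y hy1 hy2
    have hstep := st_lint hψ hη hP1 hPt1 hPtsucc 0 y hA
    have hψy : ψ y.1 y.2 = ω := psi_off hψ y hy1
    have hpt : ∀ z ∈ E3, Pt 1 (ψ y.1 y.2 * η z ^ 2, y.1) A = P {w | T (z, w) ∈ A} := by
      intro z hz
      simp only [hE3def, mem_setOf_eq, mem_Icc] at hz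
      rw [hψy, hPt1, hP1, Measure.map_apply (st_meas1 hη _) hA]
      have hoff : (ω * η z ^ 2, y.1).1 ≤ k * (ω * η z ^ 2, y.1).2 := by
        show ω * η z ^ 2 ≤ k * y.1
        nlinarith [hz.2, hy2, hω, hk, hb0]
      have hψ2 : ψ (ω * η z ^ 2) y.1 = ω := psi_off hψ _ hoff
      congr 1
      ext w
      simp only [mem_preimage, hψ2, hTdef, mem_setOf_eq]
    calc ν A = ∫⁻ z in E3, P {w | T (z, w) ∈ A} ∂P := by
          rw [hνdef, Measure.map_apply hTm hA, Measure.prod_apply (hTm hA)]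
          rfl
    _ = ∫⁻ z in E3, Pt 1 (ψ y.1 y.2 * η z ^ 2, y.1) A ∂P :=
          setLIntegral_congr_fun hE3m (fun z hz => (hpt z hz).symm)
    _ ≤ ∫⁻ z, Pt 1 (ψ y.1 y.2 * η z ^ 2, y.1) A ∂P := setLIntegral_le_lintegral _ _
    _ = Pt 2 y A := hstep.symm
  have h3 : ∀ y : ℝ × ℝ, ω ≤ y.1 → P E2 * ν A ≤ Pt 3 y A := by
    intro y hy
    have hy0 : (0 : ℝ) ≤ y.1 := le_trans hω.le hy
    have hstep := st_lint hψ hη hP1 hPt1 hPtsucc 1 y hA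
    have hψpos : (0 : ℝ) ≤ ψ y.1 y.2 := le_trans hω.le (psi_ge hψ hα y hy0)
    have hpt : ∀ z ∈ E2, ν A ≤ Pt 2 (ψ y.1 y.2 * η z ^ 2, y.1) A := by
      intro z hz
      simp only [hE2def, mem_setOf_eq, mem_Icc] at hz
      apply hνA
      · show ψ y.1 y.2 * η z ^ 2 ≤ k * y.1
        have h1 : ψ y.1 y.2 ≤ ω + α * y.1 := psi_le hψ hα y hy0
        have key : (ω + α * y.1) * gw ≤ k * y.1 := by
          rw [hgwdef, ← mul_div_assoc, div_le_iff₀ hD]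
          nlinarith [mul_nonneg (mul_nonneg hk.le hω.le) (sub_nonneg.mpr hy)]
        calc ψ y.1 y.2 * η z ^ 2 ≤ (ω + α * y.1) * gw :=
              mul_le_mul h1 hz.2 (sq_nonneg _) (by nlinarith)
        _ ≤ k * y.1 := key
      · show ω * b ≤ ψ y.1 y.2 * η z ^ 2
        exact mul_le_mul (psi_ge hψ hα y hy0) hz.1 hb0.le hψpos
    calc P E2 * ν A = ∫⁻ _ in E2, ν A ∂P := by rw [setLIntegral_const, mul_comm]
    _ ≤ ∫⁻ z in E2, Pt 2 (ψ y.1 y.2 * η z ^ 2, y.1) A ∂P :=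
          setLIntegral_mono_ae' hE2m (ae_of_all _ fun z hz => hpt z hz)
    _ ≤ ∫⁻ z, Pt 2 (ψ y.1 y.2 * η z ^ 2, y.1) A ∂P := setLIntegral_le_lintegral _ _
    _ = Pt 3 y A := hstep.symm
  -- final step
  have hx1 : (0 : ℝ) ≤ x.1 := hx.1
  have hstep := st_lint hψ hη hP1 hPt1 hPtsucc 2 x hA
  have hψpos : (0 : ℝ) ≤ ψ x.1 x.2 := le_trans hω.le (psi_ge hψ hα x hx1)
  have hpt : ∀ z ∈ E1, P E2 * ν A ≤ Pt 3 (ψ x.1 x.2 * η z ^ 2, x.1) A := by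
    intro z hz
    simp only [hE1def, mem_setOf_eq, mem_Ici] at hz
    apply h3
    show ω ≤ ψ x.1 x.2 * η z ^ 2
    calc ω = ω * 1 := (mul_one ω).symm
    _ ≤ ψ x.1 x.2 * η z ^ 2 := mul_le_mul (psi_ge hψ hα x hx1) hz zero_le_one hψpos
  calc P E1 * P E2 * ν A = (P E2 * ν A) * P E1 := by ring
  _ = ∫⁻ _ in E1, P E2 * ν A ∂P := (setLIntegral_const _ _).symm
  _ ≤ ∫⁻ z in E1, Pt 3 (ψ x.1 x.2 * η z ^ 2, x.1) A ∂P :=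
        setLIntegral_mono_ae' hE1m (ae_of_all _ fun z hz => hpt z hz)
  _ ≤ ∫⁻ z, Pt 3 (ψ x.1 x.2 * η z ^ 2, x.1) A ∂P := setLIntegral_le_lintegral _ _
  _ = Pt 4 x A := hstep.symm

variable {μ₀ : Measure (ℝ × ℝ)} {d : ℝ≥0∞}

private lemma contract
    (hω : 0 < ω) (hα : 0 ≤ α)
    (hψ : ∀ x₁ x₂, ψ x₁ x₂ = ω + α * x₁ * (if k * x₂ < x₁ then 1 else 0))
    (hη : Measurable η)
    (hP1 : ∀ x, P1 x = Measure.map (fun z => (ψ x.1 x.2 * (η z) ^ 2, x.1)) P)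
    (hPt1 : ∀ x, Pt 1 x = P1 x)
    (hPtsucc : ∀ t x, Pt (t + 1) x = (Pt t x).bind P1)
    [IsFiniteMeasure μ₀]
    (hμ₀le : ∀ x ∈ Ici (0 : ℝ) ×ˢ Ici (0 : ℝ), μ₀ ≤ Pt 4 x)
    (hd : μ₀ Set.univ + d = 1) (hd0 : d ≠ 0) :
    ∀ n (G : ℝ × ℝ → ℝ≥0∞), Measurable G → (∀ u, G u ≤ 1) →
      ∀ x ∈ Ici (0 : ℝ) ×ˢ Ici (0 : ℝ), ∀ y ∈ Ici (0 : ℝ) ×ˢ Ici (0 : ℝ),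
      ∫⁻ u, G u ∂(Pt (4 * n + 4) x) ≤ (∫⁻ u, G u ∂(Pt (4 * n + 4) y)) + d ^ (n + 1) := by
  have hmass : ∀ (m : ℕ) (x : ℝ × ℝ), Pt (m + 1) x Set.univ = 1 :=
    fun m x => (Pt_prob hη hP1 hPt1 hPtsucc hψ m x).measure_univ
  have hsupp : ∀ (m : ℕ) (x : ℝ × ℝ), x ∈ Ici (0 : ℝ) ×ˢ Ici (0 : ℝ) →
      Pt (m + 1) x (Ici (0 : ℝ) ×ˢ Ici (0 : ℝ))ᶜ = 0 :=
    fun m x hx => Pt_Q hψ hω hα hη hP1 hPt1 hPtsucc m x hx.1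
  intro n
  induction n with
  | zero =>
    intro G hGm hG1 x hx y hy
    have h := block_le (Q := Ici (0 : ℝ) ×ˢ Ici (0 : ℝ)) (μ := Pt 4 x) (ν := Pt 4 y)
      (μ₀ := μ₀) (hmass 3 x) (hmass 3 y) (hsupp 3 x hx) (hsupp 3 y hy)
      (hμ₀le x hx) (hμ₀le y hy) hd hd0 (G := G) (δ := 1)
      (fun u _ v _ => le_trans (hG1 u) le_add_self)
    simpa using h
  | succ n ih =>
    intro G hGm hG1 x hx y hy
    have harith : ∀ m : ℕ, 4 * (m + 1) + 4 = 4 + (4 * m + 3 + 1) := by omega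
    have hrepr : ∀ w : ℝ × ℝ, Pt (4 * (n + 1) + 4) w = (Pt 4 w).bind (Pt (4 * n + 4)) := by
      intro w
      rw [harith n, Pt_add hψ hη hP1 hPt1 hPtsucc (4 * n + 3) 4 w]
    have hGM : Measurable (Pt (4 * n + 4)) := Pt_meas hψ hη hP1 hPt1 hPtsucc (4 * n + 3)
    have hlin : ∀ w : ℝ × ℝ, ∫⁻ u, G u ∂(Pt (4 * (n + 1) + 4) w)
        = ∫⁻ u, (∫⁻ v, G v ∂(Pt (4 * n + 4) u)) ∂(Pt 4 w) := by
      intro w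
      rw [hrepr w]
      exact Measure.lintegral_bind hGM.aemeasurable hGm.aemeasurable
    rw [hlin x, hlin y]
    have h := block_le (Q := Ici (0 : ℝ) ×ˢ Ici (0 : ℝ)) (μ := Pt 4 x) (ν := Pt 4 y)
      (μ₀ := μ₀) (hmass 3 x) (hmass 3 y) (hsupp 3 x hx) (hsupp 3 y hy)
      (hμ₀le x hx) (hμ₀le y hy) hd hd0
      (G := fun u => ∫⁻ v, G v ∂(Pt (4 * n + 4) u)) (δ := d ^ (n + 1))
      (fun u hu v hv => ih G hGm hG1 u hu v hv)
    calc ∫⁻ u, (∫⁻ v, G v ∂(Pt (4 * n + 4) u)) ∂(Pt 4 x)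
        ≤ (∫⁻ u, (∫⁻ v, G v ∂(Pt (4 * n + 4) u)) ∂(Pt 4 y)) + d ^ (n + 1) * d := h
    _ = (∫⁻ u, (∫⁻ v, G v ∂(Pt (4 * n + 4) u)) ∂(Pt 4 y)) + d ^ (n + 1 + 1) := by
        ring

private lemma pair_le
    (hω : 0 < ω) (hα : 0 ≤ α)
    (hψ : ∀ x₁ x₂, ψ x₁ x₂ = ω + α * x₁ * (if k * x₂ < x₁ then 1 else 0))
    (hη : Measurable η)
    (hP1 : ∀ x, P1 x = Measure.map (fun z => (ψ x.1 x.2 * (η z) ^ 2, x.1)) P)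
    (hPt1 : ∀ x, Pt 1 x = P1 x)
    (hPtsucc : ∀ t x, Pt (t + 1) x = (Pt t x).bind P1)
    [IsFiniteMeasure μ₀]
    (hμ₀le : ∀ x ∈ Ici (0 : ℝ) ×ˢ Ici (0 : ℝ), μ₀ ≤ Pt 4 x)
    (hd : μ₀ Set.univ + d = 1) (hd0 : d ≠ 0) :
    ∀ n t, 4 * n + 4 ≤ t → ∀ (G : ℝ × ℝ → ℝ≥0∞), Measurable G → (∀ u, G u ≤ 1) →
      ∀ x ∈ Ici (0 : ℝ) ×ˢ Ici (0 : ℝ), ∀ y ∈ Ici (0 : ℝ) ×ˢ Ici (0 : ℝ),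
      ∫⁻ u, G u ∂(Pt t x) ≤ (∫⁻ u, G u ∂(Pt t y)) + d ^ (n + 1) := by
  intro n t ht G hGm hG1 x hx y hy
  obtain ⟨r, rfl⟩ := Nat.exists_eq_add_of_le ht
  match r with
  | 0 => exact contract hω hα hψ hη hP1 hPt1 hPtsucc hμ₀le hd hd0 n G hGm hG1 x hx y hy
  | (s + 1) =>
    have hmass : ∀ (m : ℕ) (x : ℝ × ℝ), Pt (m + 1) x Set.univ = 1 :=
      fun m x => (Pt_prob hη hP1 hPt1 hPtsucc hψ m x).measure_univ
    have hsupp : ∀ (m : ℕ) (x : ℝ × ℝ), x ∈ Ici (0 : ℝ) ×ˢ Ici (0 : ℝ) →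
        Pt (m + 1) x (Ici (0 : ℝ) ×ˢ Ici (0 : ℝ))ᶜ = 0 :=
      fun m x hx => Pt_Q hψ hω hα hη hP1 hPt1 hPtsucc m x hx.1
    have harith : 4 * n + 4 + (s + 1) = (s + 1) + (4 * n + 3 + 1) := by omega
    have hGM : Measurable (Pt (4 * n + 4)) := Pt_meas hψ hη hP1 hPt1 hPtsucc (4 * n + 3)
    have hlin : ∀ w : ℝ × ℝ, ∫⁻ u, G u ∂(Pt (4 * n + 4 + (s + 1)) w)
        = ∫⁻ u, (∫⁻ v, G v ∂(Pt (4 * n + 4) u)) ∂(Pt (s + 1) w) := by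
      intro w
      rw [harith, Pt_add hψ hη hP1 hPt1 hPtsucc (4 * n + 3) (s + 1) w]
      exact Measure.lintegral_bind hGM.aemeasurable hGm.aemeasurable
    rw [hlin x, hlin y]
    exact avg_le (hmass s x) (hmass s y) (hsupp s x hx) (hsupp s y hy)
      (fun u hu v hv => contract hω hα hψ hη hP1 hPt1 hPtsucc hμ₀le hd hd0 n G hGm hG1 u hu v hv)

private lemma indicator_facts {B : Set (ℝ × ℝ)} (hB : MeasurableSet B) :
    Measurable (B.indicator (fun _ => (1 : ℝ≥0∞)))
    ∧ (∀ u, B.indicator (fun _ => (1 : ℝ≥0∞)) u ≤ 1)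
    ∧ ∀ (μ : Measure (ℝ × ℝ)), ∫⁻ u, B.indicator (fun _ => (1 : ℝ≥0∞)) u ∂μ = μ B := by
  refine ⟨measurable_one.indicator hB, ?_, fun μ => ?_⟩
  · intro u
    classical
    by_cases h : u ∈ B <;> simp [h]
  · rw [lintegral_indicator hB]
    simp

private lemma cross_le
    (hω : 0 < ω) (hα : 0 ≤ α)
    (hψ : ∀ x₁ x₂, ψ x₁ x₂ = ω + α * x₁ * (if k * x₂ < x₁ then 1 else 0))
    (hη : Measurable η)
    (hP1 : ∀ x, P1 x = Measure.map (fun z => (ψ x.1 x.2 * (η z) ^ 2, x.1)) P)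
    (hPt1 : ∀ x, Pt 1 x = P1 x)
    (hPtsucc : ∀ t x, Pt (t + 1) x = (Pt t x).bind P1)
    [IsFiniteMeasure μ₀]
    (hμ₀le : ∀ x ∈ Ici (0 : ℝ) ×ˢ Ici (0 : ℝ), μ₀ ≤ Pt 4 x)
    (hd : μ₀ Set.univ + d = 1) (hd0 : d ≠ 0) :
    ∀ n s t, 4 * n + 4 ≤ s → s ≤ t → ∀ (B : Set (ℝ × ℝ)), MeasurableSet B →
      ∀ x ∈ Ici (0 : ℝ) ×ˢ Ici (0 : ℝ),
      Pt t x B ≤ Pt s x B + d ^ (n + 1) ∧ Pt s x B ≤ Pt t x B + d ^ (n + 1) := by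
  intro n s t hns hst B hB x hx
  obtain ⟨hBm, hB1, hBint⟩ := indicator_facts hB
  have hpw : ∀ u ∈ Ici (0 : ℝ) ×ˢ Ici (0 : ℝ), ∀ v ∈ Ici (0 : ℝ) ×ˢ Ici (0 : ℝ),
      Pt s u B ≤ Pt s v B + d ^ (n + 1) := by
    intro u hu v hv
    have := pair_le hω hα hψ hη hP1 hPt1 hPtsucc hμ₀le hd hd0 n s hns
      (B.indicator (fun _ => 1)) hBm hB1 u hu v hv
    rwa [hBint, hBint] at this
  obtain ⟨r, rfl⟩ := Nat.exists_eq_add_of_le hst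
  rcases r with _ | q
  · exact ⟨le_self_add, le_self_add⟩
  ·
    have hmass : ∀ (m : ℕ) (x : ℝ × ℝ), Pt (m + 1) x Set.univ = 1 :=
      fun m x => (Pt_prob hη hP1 hPt1 hPtsucc hψ m x).measure_univ
    have hsupp : ∀ (m : ℕ) (x : ℝ × ℝ), x ∈ Ici (0 : ℝ) ×ˢ Ici (0 : ℝ) →
        Pt (m + 1) x (Ici (0 : ℝ) ×ˢ Ici (0 : ℝ))ᶜ = 0 :=
      fun m x hx => Pt_Q hψ hω hα hη hP1 hPt1 hPtsucc m x hx.1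
    have hs1 : 1 ≤ s := le_trans (by omega) hns
    obtain ⟨s', rfl⟩ : ∃ s', s = s' + 1 := ⟨s - 1, by omega⟩
    have harith : s' + 1 + (q + 1) = (q + 1) + (s' + 1) := by omega
    have hPtsm : Measurable (Pt (s' + 1)) := Pt_meas hψ hη hP1 hPt1 hPtsucc s'
    have hrepr : Pt (s' + 1 + (q + 1)) x B = ∫⁻ u, Pt (s' + 1) u B ∂(Pt (q + 1) x) := by
      rw [harith, Pt_add hψ hη hP1 hPt1 hPtsucc s' (q + 1) x, Measure.bind_apply hB hPtsm.aemeasurable]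
    have hae : ∀ᵐ u ∂(Pt (q + 1) x), u ∈ Ici (0 : ℝ) ×ˢ Ici (0 : ℝ) := by
      rw [MeasureTheory.ae_iff]
      simpa [compl_def] using hsupp q x hx
    constructor
    · rw [hrepr]
      calc ∫⁻ u, Pt (s' + 1) u B ∂(Pt (q + 1) x)
          ≤ ∫⁻ _, Pt (s' + 1) x B + d ^ (n + 1) ∂(Pt (q + 1) x) :=
            lintegral_mono_ae (hae.mono fun u hu => hpw u hu x hx)
      _ = Pt (s' + 1) x B + d ^ (n + 1) := by rw [lintegral_const, hmass q x, mul_one]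
    · rw [hrepr]
      calc Pt (s' + 1) x B = ∫⁻ _, Pt (s' + 1) x B ∂(Pt (q + 1) x) := by
            rw [lintegral_const, hmass q x, mul_one]
      _ ≤ ∫⁻ u, Pt (s' + 1) u B + d ^ (n + 1) ∂(Pt (q + 1) x) :=
            lintegral_mono_ae (hae.mono fun u hu => hpw x hx u hu)
      _ = (∫⁻ u, Pt (s' + 1) u B ∂(Pt (q + 1) x)) + d ^ (n + 1) := by
            rw [lintegral_add_right _ measurable_const, lintegral_const, hmass q x, mul_one]

end Chain

private lemma lintegral_setwise_le {α : Type*} [MeasurableSpace α] {μ ν : Measure α}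
    (hμ1 : μ Set.univ = 1) {G : α → ℝ≥0∞} (hGm : Measurable G) (hG1 : ∀ u, G u ≤ 1)
    {δ : ℝ≥0∞} (hset : ∀ S, MeasurableSet S → μ S ≤ ν S + δ) {N : ℕ} (hN : N ≠ 0) :
    ∫⁻ u, G u ∂μ ≤ (∫⁻ u, G u ∂ν) + δ + ((N : ℝ≥0∞))⁻¹ := by
  have hNt : (N : ℝ≥0∞) ≠ ∞ := ENNReal.natCast_ne_top N
  have hN0 : (N : ℝ≥0∞) ≠ 0 := Nat.cast_ne_zero.mpr hN
  set S : ℕ → Set α := fun i => {u | ((i : ℝ≥0∞) + 1) * (N : ℝ≥0∞)⁻¹ ≤ G u} with hSdef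
  have hSm : ∀ i, MeasurableSet (S i) := fun i => measurableSet_le measurable_const hGm
  set g : α → ℝ≥0∞ := fun u => ∑ i ∈ Finset.range N, (S i).indicator (fun _ => (N : ℝ≥0∞)⁻¹) u
    with hgdef
  have hgval : ∀ u, g u = ((Finset.range N).filter (fun i => u ∈ S i)).card * (N : ℝ≥0∞)⁻¹ := by
    intro u
    classical
    simp only [hgdef]
    rw [Finset.sum_indicator_eq_sum_filter, Finset.sum_const, nsmul_eq_mul]
  -- pointwise bounds
  have hdc : ∀ u i j, i ≤ j → u ∈ S j → u ∈ S i := by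
    intro u i j hij hj
    simp only [hSdef, mem_setOf_eq] at hj ⊢
    refine le_trans (mul_le_mul_left ?_ _) hj
    exact add_le_add_left (by exact_mod_cast hij) 1
  have hlow : ∀ u, g u ≤ G u := by
    intro u
    classical
    rw [hgval u]
    set F := (Finset.range N).filter (fun i => u ∈ S i) with hF
    rcases F.eq_empty_or_nonempty with he | hne
    · simp [he]
    · set j := F.max' hne with hj
      have hjS : u ∈ S j := (Finset.mem_filter.mp (F.max'_mem hne)).2
      simp only [hSdef, mem_setOf_eq] at hjS
      have hcard : F.card ≤ j + 1 := by
        have : F ⊆ Finset.range (j + 1) := by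
          intro i hi
          exact Finset.mem_range.mpr (Nat.lt_succ_of_le (F.le_max' i hi))
        simpa using Finset.card_le_card this
      calc (F.card : ℝ≥0∞) * (N : ℝ≥0∞)⁻¹ ≤ ((j : ℝ≥0∞) + 1) * (N : ℝ≥0∞)⁻¹ := by
            gcongr
            exact_mod_cast hcard
      _ ≤ G u := hjS
  have hhigh : ∀ u, G u ≤ g u + (N : ℝ≥0∞)⁻¹ := by
    intro u
    classical
    rw [hgval u]
    set F := (Finset.range N).filter (fun i => u ∈ S i) with hF
    rcases F.eq_empty_or_nonempty with he | hne
    · have h0 : ¬ u ∈ S 0 ∨ N = 0 := by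
        rcases Nat.eq_zero_or_pos N with h | h
        · exact Or.inr h
        · by_contra hcon
          push_neg at hcon
          have : (0 : ℕ) ∈ F := Finset.mem_filter.mpr ⟨Finset.mem_range.mpr h, hcon.1⟩
          rw [he] at this
          exact absurd this (Finset.notMem_empty 0)
      rcases h0 with h0 | h0
      · have h0' : ¬ (((0 : ℕ) : ℝ≥0∞) + 1) * (N : ℝ≥0∞)⁻¹ ≤ G u := h0
        have : G u ≤ (N : ℝ≥0∞)⁻¹ := by
          have := (not_le.mp h0').le
          simpa using this
        calc G u ≤ (N : ℝ≥0∞)⁻¹ := this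
        _ ≤ (F.card : ℝ≥0∞) * (N : ℝ≥0∞)⁻¹ + (N : ℝ≥0∞)⁻¹ := le_add_self
      · exact absurd h0 hN
    · set j := F.max' hne with hj
      have hjS : u ∈ S j := (Finset.mem_filter.mp (F.max'_mem hne)).2
      have hjN : j < N := Finset.mem_range.mp (Finset.mem_filter.mp (F.max'_mem hne)).1
      have hrange : Finset.range (j + 1) ⊆ F := by
        intro i hi
        refine Finset.mem_filter.mpr ⟨Finset.mem_range.mpr (lt_of_lt_of_le
          (Finset.mem_range.mp hi) hjN), hdc u i j (Nat.lt_succ_iff.mp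
          (Finset.mem_range.mp hi)) hjS⟩
      have hcard : j + 1 ≤ F.card := by
        simpa using Finset.card_le_card hrange
      have hglow : ((j : ℝ≥0∞) + 1) * (N : ℝ≥0∞)⁻¹ ≤ (F.card : ℝ≥0∞) * (N : ℝ≥0∞)⁻¹ := by
        gcongr
        exact_mod_cast hcard
      rcases Nat.lt_or_ge (j + 1) N with hlt | hge
      · have hnot : ¬ u ∈ S (j + 1) := by
          intro hcon
          have hmem : (j + 1) ∈ F := Finset.mem_filter.mpr ⟨Finset.mem_range.mpr hlt, hcon⟩
          exact absurd (F.le_max' _ hmem) (by omega)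
        have hnot' : ¬ (((j + 1 : ℕ) : ℝ≥0∞) + 1) * (N : ℝ≥0∞)⁻¹ ≤ G u := hnot
        have hGlt : G u ≤ (((j + 1 : ℕ) : ℝ≥0∞) + 1) * (N : ℝ≥0∞)⁻¹ := (not_le.mp hnot').le
        calc G u ≤ (((j + 1 : ℕ) : ℝ≥0∞) + 1) * (N : ℝ≥0∞)⁻¹ := hGlt
        _ = ((j : ℝ≥0∞) + 1) * (N : ℝ≥0∞)⁻¹ + (N : ℝ≥0∞)⁻¹ := by
            push_cast
            ring
        _ ≤ (F.card : ℝ≥0∞) * (N : ℝ≥0∞)⁻¹ + (N : ℝ≥0∞)⁻¹ := by gcongr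
      · have hNj : (N : ℝ≥0∞) ≤ (j : ℝ≥0∞) + 1 := by exact_mod_cast hge
        calc G u ≤ 1 := hG1 u
        _ = (N : ℝ≥0∞) * (N : ℝ≥0∞)⁻¹ := (ENNReal.mul_inv_cancel hN0 hNt).symm
        _ ≤ ((j : ℝ≥0∞) + 1) * (N : ℝ≥0∞)⁻¹ := by gcongr
        _ ≤ (F.card : ℝ≥0∞) * (N : ℝ≥0∞)⁻¹ := hglow
        _ ≤ (F.card : ℝ≥0∞) * (N : ℝ≥0∞)⁻¹ + (N : ℝ≥0∞)⁻¹ := le_self_add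
  -- integral computation
  have hgint : ∀ m : Measure α, ∫⁻ u, g u ∂m
      = ∑ i ∈ Finset.range N, (N : ℝ≥0∞)⁻¹ * m (S i) := by
    intro m
    rw [hgdef]
    rw [lintegral_finset_sum _ (fun i _ => measurable_const.indicator (hSm i))]
    exact Finset.sum_congr rfl fun i _ => lintegral_indicator_const (hSm i) _
  calc ∫⁻ u, G u ∂μ ≤ ∫⁻ u, g u + (N : ℝ≥0∞)⁻¹ ∂μ := lintegral_mono hhigh
  _ = (∫⁻ u, g u ∂μ) + (N : ℝ≥0∞)⁻¹ := by
      rw [lintegral_add_right _ measurable_const, lintegral_const, hμ1, mul_one]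
  _ = (∑ i ∈ Finset.range N, (N : ℝ≥0∞)⁻¹ * μ (S i)) + (N : ℝ≥0∞)⁻¹ := by rw [hgint]
  _ ≤ (∑ i ∈ Finset.range N, (N : ℝ≥0∞)⁻¹ * (ν (S i) + δ)) + (N : ℝ≥0∞)⁻¹ := by
      gcongr with i hi
      exact hset (S i) (hSm i)
  _ = (∑ i ∈ Finset.range N, (N : ℝ≥0∞)⁻¹ * ν (S i)) + (N : ℝ≥0∞) * ((N : ℝ≥0∞)⁻¹ * δ)
        + (N : ℝ≥0∞)⁻¹ := by
      have : ∀ i ∈ Finset.range N, (N : ℝ≥0∞)⁻¹ * (ν (S i) + δ)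
          = (N : ℝ≥0∞)⁻¹ * ν (S i) + (N : ℝ≥0∞)⁻¹ * δ := fun i _ => mul_add _ _ _
      rw [Finset.sum_congr rfl this, Finset.sum_add_distrib, Finset.sum_const,
        Finset.card_range, nsmul_eq_mul]
  _ = (∫⁻ u, g u ∂ν) + δ + (N : ℝ≥0∞)⁻¹ := by
      rw [hgint, ← mul_assoc, ENNReal.mul_inv_cancel hN0 hNt, one_mul]
  _ ≤ (∫⁻ u, G u ∂ν) + δ + (N : ℝ≥0∞)⁻¹ := by
      gcongr ?_ + δ + _
      exact lintegral_mono hlow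


/-- Geometric ergodicity of the chain `X_t = (ε_t², ε_{t-1}²)` under Assumption A with
`k > 0`: there are a unique invariant probability measure `π` on `[0,∞)²` for the kernel
`P1 x = law of (ψ(x) η², x₁)` and a rate `ρ ∈ (0,1)` such that, for every starting point
`x ∈ [0,∞)²`, `ρ^{-t} ‖P^t(x,·) - π‖ → 0`, the total variation distance being expressed
as the supremum over measurable sets of `|P^t(x,B) - π(B)|`. -/
theorem stmt14
    {Ω' : Type*} [MeasurableSpace Ω'] (P : Measure Ω') [IsProbabilityMeasure P]
    (ω α k : ℝ) (hω : 0 < ω) (hα : 0 ≤ α) (hk : 0 < k)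
    (ψ : ℝ → ℝ → ℝ)
    (hψ : ∀ x₁ x₂, ψ x₁ x₂ = ω + α * x₁ * (if k * x₂ < x₁ then 1 else 0))
    (η : Ω' → ℝ) (hη : Measurable η)
    (f : ℝ → ℝ≥0∞) (hf : Measurable f) (hfpos : ∀ x, 0 ≤ x → 0 < f x)
    (hd : Measure.map (fun z => (η z) ^ 2) P = (volume.restrict (Ici (0 : ℝ))).withDensity f)
    (hint : Integrable η P) (hm : ∫ z, η z ∂P = 0) (hv : ∫ z, (η z) ^ 2 ∂P = 1)
    (P1 : ℝ × ℝ → Measure (ℝ × ℝ))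
    (hP1 : ∀ x, P1 x = Measure.map (fun z => (ψ x.1 x.2 * (η z) ^ 2, x.1)) P)
    (Pt : ℕ → ℝ × ℝ → Measure (ℝ × ℝ))
    (hPt1 : ∀ x, Pt 1 x = P1 x)
    (hPtsucc : ∀ t x, Pt (t + 1) x = (Pt t x).bind P1) :
    ∃ π : Measure (ℝ × ℝ), IsProbabilityMeasure π ∧
      π (Ici (0 : ℝ) ×ˢ Ici (0 : ℝ)) = 1 ∧
      (∀ B : Set (ℝ × ℝ), MeasurableSet B → π B = ∫⁻ x, P1 x B ∂π) ∧
      (∀ π' : Measure (ℝ × ℝ), IsProbabilityMeasure π' →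
        π' (Ici (0 : ℝ) ×ˢ Ici (0 : ℝ)) = 1 →
        (∀ B : Set (ℝ × ℝ), MeasurableSet B → π' B = ∫⁻ x, P1 x B ∂π') → π' = π) ∧
      ∃ ρ ∈ Ioo (0 : ℝ) 1, ∀ x ∈ Ici (0 : ℝ) ×ˢ Ici (0 : ℝ),
        Tendsto
          (fun t : ℕ => (ρ ^ t)⁻¹ *
            ⨆ B : {B : Set (ℝ × ℝ) // MeasurableSet B},
              |(Pt t x B.1).toReal - (π B.1).toReal|)
          atTop (nhds 0) := by
  classical
  -- Doeblin minorization
  obtain ⟨μ₀, hμ₀lt, hμ₀pos, hμ₀le⟩ := minor hω hα hk hψ hη hf hfpos hd hP1 hPt1 hPtsucc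
  haveI : IsFiniteMeasure μ₀ := ⟨hμ₀lt.trans ENNReal.one_lt_top⟩
  set dd : ℝ≥0∞ := 1 - μ₀ Set.univ with hdddef
  have hεd : μ₀ Set.univ + dd = 1 := by
    rw [hdddef]; exact add_tsub_cancel_of_le hμ₀lt.le
  have hdd0 : dd ≠ 0 := by
    rw [hdddef]
    simpa [tsub_eq_zero_iff_le] using not_le.mpr hμ₀lt
  have hddlt : dd < 1 := by
    rw [hdddef]
    exact ENNReal.sub_lt_self ENNReal.one_ne_top one_ne_zero hμ₀pos.ne'
  have hddt : dd ≠ ∞ := (hddlt.trans ENNReal.one_lt_top).ne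
  set dr : ℝ := dd.toReal with hdrdef
  have hdr0 : 0 < dr := ENNReal.toReal_pos hdd0 hddt
  have hdr1 : dr < 1 := by
    rw [hdrdef]
    rw [show (1 : ℝ) = (1 : ℝ≥0∞).toReal by simp]
    exact (ENNReal.toReal_lt_toReal hddt ENNReal.one_ne_top).mpr hddlt
  set x₀ : ℝ × ℝ := (ω, ω) with hx₀def
  have hx₀Q : x₀ ∈ Ici (0 : ℝ) ×ˢ Ici (0 : ℝ) := ⟨hω.le, hω.le⟩
  have hP1m : Measurable P1 := P1_meas hψ hη hP1
  have hmass : ∀ (m : ℕ) (x : ℝ × ℝ), Pt (m + 1) x Set.univ = 1 :=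
    fun m x => (Pt_prob hη hP1 hPt1 hPtsucc hψ m x).measure_univ
  have hsupp : ∀ (m : ℕ) (x : ℝ × ℝ), x ∈ Ici (0 : ℝ) ×ˢ Ici (0 : ℝ) →
      Pt (m + 1) x (Ici (0 : ℝ) ×ˢ Ici (0 : ℝ))ᶜ = 0 :=
    fun m x hx => Pt_Q hψ hω hα hη hP1 hPt1 hPtsucc m x hx.1
  have hQ1 : ∀ (m : ℕ) (x : ℝ × ℝ), x ∈ Ici (0 : ℝ) ×ˢ Ici (0 : ℝ) →
      Pt (m + 1) x (Ici (0 : ℝ) ×ˢ Ici (0 : ℝ)) = 1 := by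
    intro m x hx
    have h := measure_add_measure_compl (μ := Pt (m + 1) x) QQ_meas
    rw [hsupp m x hx, add_zero, hmass m x] at h
    exact h
  have hfin : ∀ (t : ℕ) (x : ℝ × ℝ) (B : Set (ℝ × ℝ)), 1 ≤ t → Pt t x B ≠ ∞ := by
    intro t x B ht
    obtain ⟨m, rfl⟩ : ∃ m, t = m + 1 := ⟨t - 1, by omega⟩
    haveI := Pt_prob hη hP1 hPt1 hPtsucc hψ m x
    exact measure_ne_top _ _
  have hle1 : ∀ (t : ℕ) (x : ℝ × ℝ) (B : Set (ℝ × ℝ)), 1 ≤ t → Pt t x B ≤ 1 := by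
    intro t x B ht
    obtain ⟨m, rfl⟩ : ∃ m, t = m + 1 := ⟨t - 1, by omega⟩
    haveI := Pt_prob hη hP1 hPt1 hPtsucc hψ m x
    exact prob_le_one
  -- two-sided ENNReal comparison between any two chain states/times
  have key : ∀ (B : Set (ℝ × ℝ)), MeasurableSet B → ∀ (n s t : ℕ), 4 * n + 4 ≤ s →
      4 * n + 4 ≤ t → ∀ y ∈ Ici (0 : ℝ) ×ˢ Ici (0 : ℝ), ∀ z ∈ Ici (0 : ℝ) ×ˢ Ici (0 : ℝ),
      Pt t y B ≤ Pt s z B + 2 * dd ^ (n + 1) := by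
    intro B hB n s t hns hnt y hy z hz
    obtain ⟨hBm, hB1, hBint⟩ := indicator_facts hB
    have h1 : Pt t y B ≤ Pt t z B + dd ^ (n + 1) := by
      have := pair_le hω hα hψ hη hP1 hPt1 hPtsucc hμ₀le hεd hdd0 n t hnt
        (B.indicator (fun _ => 1)) hBm hB1 y hy z hz
      rwa [hBint, hBint] at this
    have h2 : Pt t z B ≤ Pt s z B + dd ^ (n + 1) := by
      rcases le_total s t with hst | hts
      · exact (cross_le hω hα hψ hη hP1 hPt1 hPtsucc hμ₀le hεd hdd0 n s t hns hst B hB z hz).1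
      · exact (cross_le hω hα hψ hη hP1 hPt1 hPtsucc hμ₀le hεd hdd0 n t s hnt hts B hB z hz).2
    calc Pt t y B ≤ Pt t z B + dd ^ (n + 1) := h1
    _ ≤ Pt s z B + dd ^ (n + 1) + dd ^ (n + 1) := add_le_add_left h2 _
    _ = Pt s z B + 2 * dd ^ (n + 1) := by ring
  -- real-valued Cauchy property and limit set function
  set a : Set (ℝ × ℝ) → ℕ → ℝ := fun B t => (Pt t x₀ B).toReal with hadef
  have hkeyR : ∀ (B : Set (ℝ × ℝ)), MeasurableSet B → ∀ (n s t : ℕ), 4 * n + 4 ≤ s →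
      4 * n + 4 ≤ t → ∀ y ∈ Ici (0 : ℝ) ×ˢ Ici (0 : ℝ), ∀ z ∈ Ici (0 : ℝ) ×ˢ Ici (0 : ℝ),
      (Pt t y B).toReal ≤ (Pt s z B).toReal + 2 * dr ^ (n + 1) := by
    intro B hB n s t hns hnt y hy z hz
    have h := key B hB n s t hns hnt y hy z hz
    have hfin1 : Pt s z B ≠ ∞ := hfin s z B (by omega)
    have hfin2 : (2 : ℝ≥0∞) * dd ^ (n + 1) ≠ ∞ :=
      ENNReal.mul_ne_top (by simp) (ENNReal.pow_ne_top hddt)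
    have hmono := ENNReal.toReal_mono (ENNReal.add_ne_top.mpr ⟨hfin1, hfin2⟩) h
    rw [ENNReal.toReal_add hfin1 hfin2] at hmono
    have h2r : ((2 : ℝ≥0∞) * dd ^ (n + 1)).toReal = 2 * dr ^ (n + 1) := by
      rw [ENNReal.toReal_mul, ENNReal.toReal_pow, hdrdef]
      norm_num
    rw [h2r] at hmono
    exact hmono
  have hpow : Tendsto (fun n : ℕ => 2 * dr ^ (n + 1)) atTop (nhds 0) := by
    have h0 := tendsto_pow_atTop_nhds_zero_of_lt_one hdr0.le hdr1
    have h2 := (h0.comp (tendsto_add_atTop_nat 1)).const_mul (2 : ℝ)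
    simpa using h2
  have hCauchy : ∀ (B : Set (ℝ × ℝ)), MeasurableSet B → CauchySeq (a B) := by
    intro B hB
    rw [Metric.cauchySeq_iff']
    intro e he
    obtain ⟨n, hn⟩ := (hpow.eventually (gt_mem_nhds (half_pos he))).exists
    refine ⟨4 * n + 4, fun m hm => ?_⟩
    have h1 : (Pt m x₀ B).toReal ≤ (Pt (4 * n + 4) x₀ B).toReal + 2 * dr ^ (n + 1) :=
      hkeyR B hB n (4 * n + 4) m le_rfl hm x₀ hx₀Q x₀ hx₀Q
    have h2 : (Pt (4 * n + 4) x₀ B).toReal ≤ (Pt m x₀ B).toReal + 2 * dr ^ (n + 1) :=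
      hkeyR B hB n m (4 * n + 4) hm le_rfl x₀ hx₀Q x₀ hx₀Q
    rw [Real.dist_eq]
    have habs : |a B m - a B (4 * n + 4)| ≤ 2 * dr ^ (n + 1) := by
      rw [abs_sub_le_iff]
      constructor
      · simp only [hadef]; linarith
      · simp only [hadef]; linarith
    calc |a B m - a B (4 * n + 4)| ≤ 2 * dr ^ (n + 1) := habs
    _ < e / 2 := hn
    _ < e := by linarith
  set p : Set (ℝ × ℝ) → ℝ := fun B => limUnder atTop (a B) with hpdef
  have hplim : ∀ (B : Set (ℝ × ℝ)), MeasurableSet B → Tendsto (a B) atTop (nhds (p B)) :=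
    fun B hB => (hCauchy B hB).tendsto_limUnder
  have hGapR : ∀ (B : Set (ℝ × ℝ)), MeasurableSet B → ∀ (n t : ℕ), 4 * n + 4 ≤ t →
      ∀ y ∈ Ici (0 : ℝ) ×ˢ Ici (0 : ℝ),
      |(Pt t y B).toReal - p B| ≤ 2 * dr ^ (n + 1) := by
    intro B hB n t hnt y hy
    have htend : Tendsto (fun s => |(Pt t y B).toReal - a B s|) atTop
        (nhds |(Pt t y B).toReal - p B|) := (tendsto_const_nhds.sub (hplim B hB)).abs
    refine le_of_tendsto htend ?_
    filter_upwards [eventually_ge_atTop (4 * n + 4)] with s hs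
    have h1 : (Pt t y B).toReal ≤ (Pt s x₀ B).toReal + 2 * dr ^ (n + 1) :=
      hkeyR B hB n s t hs hnt y hy x₀ hx₀Q
    have h2 : (Pt s x₀ B).toReal ≤ (Pt t y B).toReal + 2 * dr ^ (n + 1) :=
      hkeyR B hB n t s hnt hs x₀ hx₀Q y hy
    rw [abs_sub_le_iff]
    constructor
    · simp only [hadef]; linarith
    · simp only [hadef]; linarith
  have hp0 : ∀ (B : Set (ℝ × ℝ)), MeasurableSet B → 0 ≤ p B := by
    intro B hB
    exact ge_of_tendsto (hplim B hB) (Eventually.of_forall fun t => ENNReal.toReal_nonneg)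
  have hp1 : ∀ (B : Set (ℝ × ℝ)), MeasurableSet B → p B ≤ 1 := by
    intro B hB
    refine le_of_tendsto (hplim B hB) ?_
    filter_upwards [eventually_ge_atTop 1] with t ht
    have := ENNReal.toReal_mono ENNReal.one_ne_top (hle1 t x₀ B ht)
    simpa using this
  have hpuniv : p Set.univ = 1 := by
    refine tendsto_nhds_unique (hplim Set.univ MeasurableSet.univ) ?_
    refine Tendsto.congr' ?_ tendsto_const_nhds
    filter_upwards [eventually_ge_atTop 1] with t ht
    obtain ⟨m, rfl⟩ : ∃ m, t = m + 1 := ⟨t - 1, by omega⟩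
    simp only [hadef, hmass m x₀]
    simp
  have hpempty : p ∅ = 0 := by
    refine tendsto_nhds_unique (hplim ∅ MeasurableSet.empty) ?_
    refine Tendsto.congr' ?_ tendsto_const_nhds
    filter_upwards with t
    simp [hadef]
  have hpadd : ∀ (B C : Set (ℝ × ℝ)), MeasurableSet B → MeasurableSet C → Disjoint B C →
      p (B ∪ C) = p B + p C := by
    intro B C hB hC hBC
    refine tendsto_nhds_unique (hplim (B ∪ C) (hB.union hC)) ?_
    refine Tendsto.congr' ?_ ((hplim B hB).add (hplim C hC))
    filter_upwards [eventually_ge_atTop 1] with t ht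
    simp only [hadef]
    rw [measure_union hBC hC, ENNReal.toReal_add (hfin t x₀ B ht) (hfin t x₀ C ht)]
  have hpsigma : ∀ (g : ℕ → Set (ℝ × ℝ)), (∀ i, MeasurableSet (g i)) →
      Pairwise (Function.onFun Disjoint g) →
      Tendsto (fun N => ∑ i ∈ Finset.range N, p (g i)) atTop (nhds (p (⋃ i, g i))) := by
    intro g hgm hgd
    set U : ℕ → Set (ℝ × ℝ) := fun N => ⋃ i ∈ Finset.range N, g i with hUdef
    set Tl : ℕ → Set (ℝ × ℝ) := fun N => ⋃ i, g (N + i) with hTldef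
    have hUm : ∀ N, MeasurableSet (U N) := fun N => (Finset.range N).measurableSet_biUnion
      (fun i _ => hgm i)
    have hTlm : ∀ N, MeasurableSet (Tl N) := fun N => MeasurableSet.iUnion (fun i => hgm (N + i))
    have hUTl : ∀ N, (⋃ i, g i) = U N ∪ Tl N := by
      intro N
      ext w
      simp only [hUdef, hTldef, mem_iUnion, mem_union, Finset.mem_range, exists_prop]
      constructor
      · rintro ⟨i, hi⟩
        rcases Nat.lt_or_ge i N with h | h
        · exact Or.inl ⟨i, h, hi⟩
        · exact Or.inr ⟨i - N, by rwa [Nat.add_sub_cancel' h]⟩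
      · rintro (⟨i, _, hi⟩ | ⟨i, hi⟩)
        · exact ⟨i, hi⟩
        · exact ⟨N + i, hi⟩
    have hUTldisj : ∀ N, Disjoint (U N) (Tl N) := by
      intro N
      simp only [hUdef, hTldef]
      refine Set.disjoint_iUnion_left.mpr fun i => Set.disjoint_iUnion_left.mpr fun hi =>
        Set.disjoint_iUnion_right.mpr fun j => hgd ?_
      have : i < N := Finset.mem_range.mp hi
      omega
    have hUsum : ∀ N, p (U N) = ∑ i ∈ Finset.range N, p (g i) := by
      intro N
      induction N with
      | zero => simpa [hUdef] using hpempty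
      | succ m ih =>
        have hU1 : U (m + 1) = U m ∪ g m := by
          simp only [hUdef, Finset.range_add_one]
          rw [Finset.set_biUnion_insert]
          rw [union_comm]
        have hdisj : Disjoint (U m) (g m) := by
          simp only [hUdef]
          refine Set.disjoint_iUnion_left.mpr fun i => Set.disjoint_iUnion_left.mpr fun hi =>
            hgd ?_
          have : i < m := Finset.mem_range.mp hi
          omega
        rw [hU1, hpadd (U m) (g m) (hUm m) (hgm m) hdisj, ih, Finset.sum_range_succ]
    have hTl0 : Tendsto (fun N => p (Tl N)) atTop (nhds 0) := by
      rw [Metric.tendsto_atTop]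
      intro e he
      obtain ⟨n, hn⟩ := (hpow.eventually (gt_mem_nhds (half_pos (half_pos he)))).exists
      have hanti : Antitone Tl := by
        intro N M hNM w hw
        simp only [hTldef, mem_iUnion] at hw ⊢
        obtain ⟨i, hi⟩ := hw
        exact ⟨M - N + i, by rwa [show N + (M - N + i) = M + i by omega]⟩
      have hinter : (⋂ N, Tl N) = ∅ := by
        ext w
        simp only [mem_iInter, mem_empty_iff_false, iff_false, not_forall]
        by_contra hcon
        push_neg at hcon
        obtain ⟨i, hi⟩ : ∃ i, w ∈ g i := by
          have := hcon 0
          simp only [hTldef, mem_iUnion] at this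
          obtain ⟨j, hj⟩ := this
          exact ⟨j, by simpa using hj⟩
        obtain ⟨j, hj⟩ : ∃ j, w ∈ g (i + 1 + j) := by
          have := hcon (i + 1)
          simp only [hTldef, mem_iUnion] at this
          exact this
        exact (Set.disjoint_left.mp (hgd (show i ≠ i + 1 + j by omega)) hi hj).elim
      have hmt : Tendsto (fun N => Pt (4 * n + 4) x₀ (Tl N)) atTop (nhds 0) := by
        have := tendsto_measure_iInter_atTop (μ := Pt (4 * n + 4) x₀)
          (fun N => (hTlm N).nullMeasurableSet) hanti
          ⟨0, hfin (4 * n + 4) x₀ (Tl 0) (by omega)⟩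
        rwa [hinter, measure_empty] at this
      have hmtr : Tendsto (fun N => (Pt (4 * n + 4) x₀ (Tl N)).toReal) atTop (nhds 0) := by
        have h0 := (ENNReal.tendsto_toReal ENNReal.zero_ne_top).comp hmt
        exact h0
      rw [Metric.tendsto_atTop] at hmtr
      obtain ⟨N₀, hN₀⟩ := hmtr (e / 2 / 2) (by linarith)
      refine ⟨N₀, fun N hN => ?_⟩
      have hgap := hGapR (Tl N) (hTlm N) n (4 * n + 4) le_rfl x₀ hx₀Q
      have habs := abs_sub_le_iff.mp hgap
      have hsm := hN₀ N hN
      rw [Real.dist_eq] at hsm ⊢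
      have h1 : p (Tl N) ≤ (Pt (4 * n + 4) x₀ (Tl N)).toReal + 2 * dr ^ (n + 1) := by
        linarith [habs.2]
      have h2 : (0 : ℝ) ≤ p (Tl N) := hp0 _ (hTlm N)
      have h3 : |(Pt (4 * n + 4) x₀ (Tl N)).toReal - 0| < e / 2 / 2 := hsm
      rw [abs_sub_comm, abs_sub_lt_iff] at h3
      rw [sub_zero, abs_of_nonneg h2]
      calc p (Tl N) ≤ (Pt (4 * n + 4) x₀ (Tl N)).toReal + 2 * dr ^ (n + 1) := h1
      _ < e / 2 / 2 + e / 2 / 2 := by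
          have := h3.2
          have h4 : 2 * dr ^ (n + 1) < e / 2 / 2 := hn
          linarith
      _ ≤ e := by linarith
    have hdecomp : ∀ N, ∑ i ∈ Finset.range N, p (g i) = p (⋃ i, g i) - p (Tl N) := by
      intro N
      have := hpadd (U N) (Tl N) (hUm N) (hTlm N) (hUTldisj N)
      rw [← hUTl N] at this
      rw [← hUsum N]
      linarith
    refine Tendsto.congr (fun N => (hdecomp N).symm) ?_
    have h := Tendsto.sub (tendsto_const_nhds (x := p (⋃ i, g i)) (f := atTop)) hTl0
    simpa using h
  -- the invariant measure
  set π : Measure (ℝ × ℝ) := Measure.ofMeasurable (fun s _ => ENNReal.ofReal (p s))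
    (by show ENNReal.ofReal (p ∅) = 0; rw [hpempty]; simp)
    (by
      intro g hgm hgd
      show ENNReal.ofReal (p (⋃ i, g i)) = ∑' i, ENNReal.ofReal (p (g i))
      have hsum : HasSum (fun i => p (g i)) (p (⋃ i, g i)) :=
        (hasSum_iff_tendsto_nat_of_nonneg (fun i => hp0 (g i) (hgm i)) _).mpr (hpsigma g hgm hgd)
      rw [← hsum.tsum_eq, ENNReal.ofReal_tsum_of_nonneg (fun i => hp0 (g i) (hgm i)) hsum.summable])
    with hπdef
  have hπap : ∀ (B : Set (ℝ × ℝ)), MeasurableSet B → π B = ENNReal.ofReal (p B) :=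
    fun B hB => Measure.ofMeasurable_apply B hB
  have hπtoReal : ∀ (B : Set (ℝ × ℝ)), MeasurableSet B → (π B).toReal = p B := by
    intro B hB
    rw [hπap B hB, ENNReal.toReal_ofReal (hp0 B hB)]
  haveI hπprob : IsProbabilityMeasure π := by
    constructor
    rw [hπap _ MeasurableSet.univ, hpuniv]
    simp
  -- ENNReal setwise comparison between π and the chain
  have hC : ∀ (S : Set (ℝ × ℝ)), MeasurableSet S → ∀ (n t : ℕ), 4 * n + 4 ≤ t →
      ∀ y ∈ Ici (0 : ℝ) ×ˢ Ici (0 : ℝ),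
      Pt t y S ≤ π S + ENNReal.ofReal (2 * dr ^ (n + 1)) ∧
      π S ≤ Pt t y S + ENNReal.ofReal (2 * dr ^ (n + 1)) := by
    intro S hS n t hnt y hy
    have h := abs_sub_le_iff.mp (hGapR S hS n t hnt y hy)
    have hfinS : Pt t y S ≠ ∞ := hfin t y S (by omega)
    have hrepr : Pt t y S = ENNReal.ofReal ((Pt t y S).toReal) :=
      (ENNReal.ofReal_toReal hfinS).symm
    constructor
    · rw [hrepr, hπap S hS, ← ENNReal.ofReal_add (hp0 S hS) (by positivity)]
      exact ENNReal.ofReal_le_ofReal (by linarith [h.1])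
    · rw [hπap S hS]
      conv_rhs => rw [hrepr]
      rw [← ENNReal.ofReal_add ENNReal.toReal_nonneg (by positivity)]
      exact ENNReal.ofReal_le_ofReal (by linarith [h.2])
  have hcn : Tendsto (fun n : ℕ => ENNReal.ofReal (2 * dr ^ (n + 1))) atTop (nhds 0) := by
    have h := ENNReal.tendsto_ofReal hpow
    simpa using h
  have hinvnat : Tendsto (fun n : ℕ => (((n : ℕ) + 1 : ℕ) : ℝ≥0∞)⁻¹) atTop (nhds 0) :=
    ENNReal.tendsto_inv_nat_nhds_zero.comp (tendsto_add_atTop_nat 1)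
  have herr : Tendsto (fun n : ℕ => ENNReal.ofReal (2 * dr ^ (n + 1))
      + ENNReal.ofReal (2 * dr ^ (n + 1)) + (((n : ℕ) + 1 : ℕ) : ℝ≥0∞)⁻¹) atTop (nhds 0) := by
    have h := (hcn.add hcn).add hinvnat
    simpa using h
  have hinv : ∀ (B : Set (ℝ × ℝ)), MeasurableSet B → π B = ∫⁻ x, P1 x B ∂π := by
    intro B hB
    set g : ℝ × ℝ → ℝ≥0∞ := fun y => P1 y B with hgdef
    have hgm : Measurable g := (Measure.measurable_coe hB).comp hP1m
    have hg1 : ∀ u, g u ≤ 1 := by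
      intro u
      haveI := P1_prob hη hP1 u
      exact prob_le_one
    have hbindeq : ∀ t : ℕ, ∫⁻ y, g y ∂(Pt t x₀) = Pt (t + 1) x₀ B := by
      intro t
      rw [hPtsucc t x₀, Measure.bind_apply hB hP1m.aemeasurable]
    set c : ℕ → ℝ≥0∞ := fun n => ENNReal.ofReal (2 * dr ^ (n + 1)) with hcdef
    have hmain : ∀ n : ℕ, (∫⁻ y, g y ∂π) ≤ π B + (c n + c n + (((n : ℕ) + 1 : ℕ) : ℝ≥0∞)⁻¹)
        ∧ π B ≤ (∫⁻ y, g y ∂π) + (c n + c n + (((n : ℕ) + 1 : ℕ) : ℝ≥0∞)⁻¹) := by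
      intro n
      have hδ1 : ∀ S, MeasurableSet S → π S ≤ Pt (4 * n + 4) x₀ S + c n :=
        fun S hS => (hC S hS n (4 * n + 4) le_rfl x₀ hx₀Q).2
      have hδ2 : ∀ S, MeasurableSet S → Pt (4 * n + 4) x₀ S ≤ π S + c n :=
        fun S hS => (hC S hS n (4 * n + 4) le_rfl x₀ hx₀Q).1
      have hπ1 : π Set.univ = 1 := measure_univ
      have hPtuniv : Pt (4 * n + 4) x₀ Set.univ = 1 := hmass (4 * n + 3) x₀
      have hup := lintegral_setwise_le hπ1 hgm hg1 hδ1 (N := n + 1) (Nat.succ_ne_zero n)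
      have hdn := lintegral_setwise_le hPtuniv hgm hg1 hδ2 (N := n + 1) (Nat.succ_ne_zero n)
      constructor
      · calc ∫⁻ y, g y ∂π
            ≤ (∫⁻ y, g y ∂(Pt (4 * n + 4) x₀)) + c n + (((n : ℕ) + 1 : ℕ) : ℝ≥0∞)⁻¹ := hup
        _ = Pt (4 * n + 4 + 1) x₀ B + c n + (((n : ℕ) + 1 : ℕ) : ℝ≥0∞)⁻¹ := by
            rw [hbindeq (4 * n + 4)]
        _ ≤ (π B + c n) + c n + (((n : ℕ) + 1 : ℕ) : ℝ≥0∞)⁻¹ := by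
            gcongr
            exact (hC B hB n (4 * n + 4 + 1) (by omega) x₀ hx₀Q).1
        _ = π B + (c n + c n + (((n : ℕ) + 1 : ℕ) : ℝ≥0∞)⁻¹) := by ring
      · calc π B ≤ Pt (4 * n + 4 + 1) x₀ B + c n :=
            (hC B hB n (4 * n + 4 + 1) (by omega) x₀ hx₀Q).2
        _ = (∫⁻ y, g y ∂(Pt (4 * n + 4) x₀)) + c n := by rw [hbindeq (4 * n + 4)]
        _ ≤ ((∫⁻ y, g y ∂π) + c n + (((n : ℕ) + 1 : ℕ) : ℝ≥0∞)⁻¹) + c n := by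
            gcongr
        _ ≤ (∫⁻ y, g y ∂π) + (c n + c n + (((n : ℕ) + 1 : ℕ) : ℝ≥0∞)⁻¹) := by
            rw [← add_assoc]
            ring_nf
            exact le_rfl
    have he1 : Tendsto (fun n : ℕ => π B + (c n + c n + (((n : ℕ) + 1 : ℕ) : ℝ≥0∞)⁻¹))
        atTop (nhds (π B)) := by
      have h := Tendsto.add (tendsto_const_nhds (x := π B) (f := atTop)) herr
      simpa [hcdef] using h
    have he2 : Tendsto (fun n : ℕ => (∫⁻ y, g y ∂π)
        + (c n + c n + (((n : ℕ) + 1 : ℕ) : ℝ≥0∞)⁻¹)) atTop (nhds (∫⁻ y, g y ∂π)) := by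
      have h := Tendsto.add (tendsto_const_nhds (x := ∫⁻ y, g y ∂π) (f := atTop)) herr
      simpa [hcdef] using h
    have h1 : (∫⁻ y, g y ∂π) ≤ π B :=
      ge_of_tendsto he1 (Eventually.of_forall fun n => (hmain n).1)
    have h2 : π B ≤ ∫⁻ y, g y ∂π :=
      ge_of_tendsto he2 (Eventually.of_forall fun n => (hmain n).2)
    exact le_antisymm h2 h1
  have huniq : ∀ π' : Measure (ℝ × ℝ), IsProbabilityMeasure π' →
      π' (Ici (0 : ℝ) ×ˢ Ici (0 : ℝ)) = 1 →
      (∀ B : Set (ℝ × ℝ), MeasurableSet B → π' B = ∫⁻ x, P1 x B ∂π') → π' = π := by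
    intro π' hπ'prob hπ'Q hπ'inv
    have hπ'c : π' (Ici (0 : ℝ) ×ˢ Ici (0 : ℝ))ᶜ = 0 := by
      rw [prob_compl_eq_one_sub QQ_meas, hπ'Q]
      simp
    have hbind : π'.bind P1 = π' := by
      ext s hs
      rw [Measure.bind_apply hs hP1m.aemeasurable]
      exact (hπ'inv s hs).symm
    have hbt : ∀ t : ℕ, π'.bind (Pt (t + 1)) = π' := by
      intro t
      induction t with
      | zero => rw [show Pt 1 = P1 from funext hPt1]; exact hbind
      | succ m ih =>
        have h1 : Pt (m + 2) = fun y => (Pt (m + 1) y).bind P1 :=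
          funext fun y => hPtsucc (m + 1) y
        rw [h1, ← Measure.bind_bind (Pt_meas hψ hη hP1 hPt1 hPtsucc m).aemeasurable hP1m.aemeasurable, ih, hbind]
    have hval : ∀ (B : Set (ℝ × ℝ)), MeasurableSet B → ∀ t : ℕ,
        π' B = ∫⁻ y, Pt (t + 1) y B ∂π' := by
      intro B hB t
      conv_lhs => rw [← hbt t]
      rw [Measure.bind_apply hB (Pt_meas hψ hη hP1 hPt1 hPtsucc t).aemeasurable]
    have hae : ∀ᵐ y ∂π', y ∈ Ici (0 : ℝ) ×ˢ Ici (0 : ℝ) := by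
      rw [MeasureTheory.ae_iff]
      simpa [compl_def] using hπ'c
    ext B hB
    have hboth : ∀ n : ℕ, π' B ≤ π B + ENNReal.ofReal (2 * dr ^ (n + 1))
        ∧ π B ≤ π' B + ENNReal.ofReal (2 * dr ^ (n + 1)) := by
      intro n
      have hmeasPt : Measurable fun y => Pt (4 * n + 3 + 1) y B :=
        (Measure.measurable_coe hB).comp (Pt_meas hψ hη hP1 hPt1 hPtsucc (4 * n + 3))
      constructor
      · rw [hval B hB (4 * n + 3)]
        calc ∫⁻ y, Pt (4 * n + 3 + 1) y B ∂π'
            ≤ ∫⁻ _, π B + ENNReal.ofReal (2 * dr ^ (n + 1)) ∂π' :=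
              lintegral_mono_ae (hae.mono fun y hy =>
                (hC B hB n (4 * n + 3 + 1) (by omega) y hy).1)
        _ = π B + ENNReal.ofReal (2 * dr ^ (n + 1)) := by
            rw [lintegral_const, measure_univ, mul_one]
      · calc π B = ∫⁻ _, π B ∂π' := by rw [lintegral_const, measure_univ, mul_one]
        _ ≤ ∫⁻ y, Pt (4 * n + 3 + 1) y B + ENNReal.ofReal (2 * dr ^ (n + 1)) ∂π' :=
              lintegral_mono_ae (hae.mono fun y hy =>
                (hC B hB n (4 * n + 3 + 1) (by omega) y hy).2)
        _ = (∫⁻ y, Pt (4 * n + 3 + 1) y B ∂π') + ENNReal.ofReal (2 * dr ^ (n + 1)) := by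
              rw [lintegral_add_right _ measurable_const, lintegral_const, measure_univ,
                mul_one]
        _ = π' B + ENNReal.ofReal (2 * dr ^ (n + 1)) := by rw [← hval B hB (4 * n + 3)]
    have he1 : Tendsto (fun n : ℕ => π B + ENNReal.ofReal (2 * dr ^ (n + 1)))
        atTop (nhds (π B)) := by
      have h := Tendsto.add (tendsto_const_nhds (x := π B) (f := atTop)) hcn
      simpa using h
    have he2 : Tendsto (fun n : ℕ => π' B + ENNReal.ofReal (2 * dr ^ (n + 1)))
        atTop (nhds (π' B)) := by
      have h := Tendsto.add (tendsto_const_nhds (x := π' B) (f := atTop)) hcn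
      simpa using h
    exact le_antisymm (ge_of_tendsto he1 (Eventually.of_forall fun n => (hboth n).1))
      (ge_of_tendsto he2 (Eventually.of_forall fun n => (hboth n).2))
  have hπQ : π (Ici (0 : ℝ) ×ˢ Ici (0 : ℝ)) = 1 := by
    have hpQ : p (Ici (0 : ℝ) ×ˢ Ici (0 : ℝ)) = 1 := by
      refine tendsto_nhds_unique (hplim _ QQ_meas) ?_
      refine Tendsto.congr' ?_ tendsto_const_nhds
      filter_upwards [eventually_ge_atTop 1] with t ht
      obtain ⟨m, rfl⟩ : ∃ m, t = m + 1 := ⟨t - 1, by omega⟩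
      simp only [hadef, hQ1 m x₀ hx₀Q]
      simp
    rw [hπap _ QQ_meas, hpQ]
    simp
  refine ⟨π, hπprob, hπQ, hinv, huniq, ?_⟩
  set ρ : ℝ := Real.sqrt (Real.sqrt (Real.sqrt dr)) with hρdef
  have hρ0 : 0 < ρ := Real.sqrt_pos.mpr (Real.sqrt_pos.mpr (Real.sqrt_pos.mpr hdr0))
  have hsqrt_lt_one : ∀ u : ℝ, 0 ≤ u → u < 1 → Real.sqrt u < 1 := by
    intro u hu0 hu1
    rw [show (1 : ℝ) = Real.sqrt 1 by simp]
    exact Real.sqrt_lt_sqrt hu0 hu1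
  have hρ1 : ρ < 1 :=
    hsqrt_lt_one _ (Real.sqrt_nonneg _)
      (hsqrt_lt_one _ (Real.sqrt_nonneg _) (hsqrt_lt_one _ hdr0.le hdr1))
  have hρ8 : ρ ^ 8 = dr := by
    calc ρ ^ 8 = ((ρ ^ 2) ^ 2) ^ 2 := by ring
    _ = dr := by
        rw [hρdef, Real.sq_sqrt (Real.sqrt_nonneg _), Real.sq_sqrt (Real.sqrt_nonneg _),
          Real.sq_sqrt hdr0.le]
  refine ⟨ρ, ⟨hρ0, hρ1⟩, ?_⟩
  intro x hx
  have hbdd : ∀ t : ℕ, 1 ≤ t → BddAbove (Set.range fun B : {B : Set (ℝ × ℝ) // MeasurableSet B}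
      => |(Pt t x B.1).toReal - (π B.1).toReal|) := by
    intro t ht
    refine ⟨2, ?_⟩
    rintro v ⟨B, rfl⟩
    have h1 : (Pt t x B.1).toReal ≤ 1 := by
      have := ENNReal.toReal_mono ENNReal.one_ne_top (hle1 t x B.1 ht)
      simpa using this
    have h2 : (π B.1).toReal ≤ 1 := by
      rw [hπtoReal B.1 B.2]
      exact hp1 B.1 B.2
    have h3 : (0 : ℝ) ≤ (Pt t x B.1).toReal := ENNReal.toReal_nonneg
    have h4 : (0 : ℝ) ≤ (π B.1).toReal := ENNReal.toReal_nonneg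
    exact abs_sub_le_iff.mpr ⟨by linarith, by linarith⟩
  have hlow : ∀ t : ℕ, 1 ≤ t → 0 ≤ (ρ ^ t)⁻¹ *
      ⨆ B : {B : Set (ℝ × ℝ) // MeasurableSet B}, |(Pt t x B.1).toReal - (π B.1).toReal| := by
    intro t ht
    apply mul_nonneg (inv_nonneg.mpr (pow_nonneg hρ0.le t))
    have h0 := le_ciSup (hbdd t ht) (⟨∅, MeasurableSet.empty⟩ :
      {B : Set (ℝ × ℝ) // MeasurableSet B})
    exact le_trans (abs_nonneg _) h0
  have hup : ∀ t : ℕ, 8 ≤ t →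
      (⨆ B : {B : Set (ℝ × ℝ) // MeasurableSet B}, |(Pt t x B.1).toReal - (π B.1).toReal|)
      ≤ 2 * dr ^ (t / 4 - 1 + 1) := by
    intro t ht
    refine ciSup_le fun B => ?_
    rw [hπtoReal B.1 B.2]
    exact hGapR B.1 B.2 (t / 4 - 1) t (by omega) x hx
  have hgt : Tendsto (fun t : ℕ => 2 * ρ ^ (t - 6)) atTop (nhds 0) := by
    have h := ((tendsto_pow_atTop_nhds_zero_of_lt_one hρ0.le hρ1).comp
      (tendsto_sub_atTop_nat 6)).const_mul (2 : ℝ)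
    simpa using h
  refine tendsto_of_tendsto_of_tendsto_of_le_of_le' tendsto_const_nhds hgt ?_ ?_
  · filter_upwards [eventually_ge_atTop 1] with t ht
    exact hlow t ht
  · filter_upwards [eventually_ge_atTop 8] with t ht
    have hdrpow : dr ^ (t / 4 - 1 + 1) ≤ ρ ^ t * ρ ^ (t - 6) := by
      rw [← hρ8, ← pow_mul]
      have hexp : ρ ^ (8 * (t / 4 - 1 + 1)) ≤ ρ ^ (t + (t - 6)) :=
        pow_le_pow_of_le_one hρ0.le hρ1.le (by omega)
      rwa [pow_add] at hexp
    calc (ρ ^ t)⁻¹ *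
        ⨆ B : {B : Set (ℝ × ℝ) // MeasurableSet B}, |(Pt t x B.1).toReal - (π B.1).toReal|
        ≤ (ρ ^ t)⁻¹ * (2 * dr ^ (t / 4 - 1 + 1)) := by
          exact mul_le_mul_of_nonneg_left (hup t ht) (inv_nonneg.mpr (pow_nonneg hρ0.le t))
    _ ≤ (ρ ^ t)⁻¹ * (2 * (ρ ^ t * ρ ^ (t - 6))) := by
          have h2 : (0 : ℝ) ≤ (ρ ^ t)⁻¹ := inv_nonneg.mpr (pow_nonneg hρ0.le t)
          exact mul_le_mul_of_nonneg_left (by linarith) h2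
    _ = 2 * ρ ^ (t - 6) := by
          rw [show (ρ ^ t)⁻¹ * (2 * (ρ ^ t * ρ ^ (t - 6)))
            = 2 * ρ ^ (t - 6) * ((ρ ^ t)⁻¹ * ρ ^ t) by ring,
            inv_mul_cancel₀ (pow_ne_zero t hρ0.ne'), mul_one]
end

section
/- Under Assumption A with k > 0, let p be a positive integer with μ_{2p} = E[(η²)^p] < ∞, and suppose there exists an integer m ≥ 1 with μ_{2m}, μ_{2mp} < ∞ such that α^{2p+m−1} · μ_{2p} · μ_{2m}^{(m−1)/m} · μ_{2mp}^{1/m} < k^{m−1} (i.e., condition (3.7): 0 ≤ α < max_m (k^{m−1}/(μ_{2p}·μ_{2m}^{1−1/m}·μ_{2mp}^{1/m}))^{1/(2p+m−1)}). Then there exist β > 0, M > 0 and b > 0 such that, with C = [0,M]² ∪ {(x₁,x₂) ∈ [0,∞)² : x₁ ≤ k·x₂} and η₁, η₂ i.i.d. copies of η: E[(η₂²)^p · ψ(ψ(x₁,x₂)·η₁², x₁)^p] ≤ (1−β)·x₁^p − β for every x ∈ [0,∞)² \ C, and E[(η₂²)^p · ψ(ψ(x₁,x₂)·η₁², x₁)^p]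 ≤ b for every x ∈ C. -/
open MeasureTheory ProbabilityTheory Set Filter
open scoped ENNReal Topology
set_option maxHeartbeats 1000000

private lemma aux_markov {Ω : Type*} [MeasurableSpace Ω] (P : Measure Ω) [IsProbabilityMeasure P]
    (Y : Ω → ℝ) (m : ℕ) (hYnn : ∀ z, 0 ≤ Y z)
    (hint : Integrable (fun z => Y z ^ m) P) (t : ℝ) (ht : 0 < t) :
    ∫ z, (if t < Y z then (1:ℝ) else 0) ∂P ≤ (∫ z, Y z ^ m ∂P) / t ^ m := by
  have htm : (0:ℝ) < t ^ m := pow_pos ht m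
  have h1 : ∫ z, (if t < Y z then (1:ℝ) else 0) ∂P ≤ ∫ z, Y z ^ m * (t ^ m)⁻¹ ∂P := by
    refine integral_mono_of_nonneg ?_ (hint.mul_const _) ?_
    · filter_upwards with z; positivity
    · filter_upwards with z
      by_cases h : t < Y z
      · simp only [h, if_true]
        rw [← div_eq_mul_inv, le_div_iff₀ htm, one_mul]
        exact pow_le_pow_left₀ ht.le h.le m
      · simp only [h, if_false]
        exact mul_nonneg (pow_nonneg (hYnn z) m) (by positivity)
  calc ∫ z, (if t < Y z then (1:ℝ) else 0) ∂P ≤ ∫ z, Y z ^ m * (t ^ m)⁻¹ ∂P := h1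
    _ = (∫ z, Y z ^ m ∂P) * (t ^ m)⁻¹ := integral_mul_const _ _
    _ = (∫ z, Y z ^ m ∂P) / t ^ m := (div_eq_mul_inv _ _).symm


private lemma aux_holder {Ω : Type*} [MeasurableSpace Ω] (P : Measure Ω) [IsProbabilityMeasure P]
    (Y : Ω → ℝ) (hY : Measurable Y) (hYnn : ∀ z, 0 ≤ Y z) (p m : ℕ) (hm1 : 1 ≤ m)
    (hYm : Integrable (fun z => Y z ^ m) P) (hYmp : Integrable (fun z => Y z ^ (m * p)) P)
    (t : ℝ) (ht : 0 < t) :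
    ∫ z, Y z ^ p * (if t < Y z then (1:ℝ) else 0) ∂P ≤
      (∫ z, Y z ^ m ∂P) ^ (((m : ℝ) - 1) / (m : ℝ)) * (∫ z, Y z ^ (m * p) ∂P) ^ (1 / (m : ℝ)) *
        (1 / t) ^ (m - 1) := by
  have hμm_nn : (0:ℝ) ≤ ∫ z, Y z ^ m ∂P := integral_nonneg fun z => pow_nonneg (hYnn z) m
  have hμmp_nn : (0:ℝ) ≤ ∫ z, Y z ^ (m * p) ∂P :=
    integral_nonneg fun z => pow_nonneg (hYnn z) _
  rcases eq_or_lt_of_le hm1 with h1 | h2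
  · -- m = 1
    subst h1
    simp only [Nat.cast_one, sub_self, zero_div, Real.rpow_zero, one_mul, Nat.sub_self,
      pow_zero, mul_one, one_div, inv_one, Real.rpow_one]
    refine integral_mono_of_nonneg ?_ (by simpa using hYmp) ?_
    · filter_upwards with z
      have := hYnn z
      positivity
    · filter_upwards with z
      refine mul_le_of_le_one_right (pow_nonneg (hYnn z) p) ?_
      split <;> norm_num
  · -- 2 ≤ m
    have hm1R : (1:ℝ) < (m:ℝ) := by exact_mod_cast h2
    have hmR0 : (m:ℝ) ≠ 0 := by positivity
    set q : ℝ := (m:ℝ) / ((m:ℝ) - 1) with hq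
    have hpq : Real.HolderConjugate (m:ℝ) q := (Real.holderConjugate_iff_eq_conjExponent hm1R).2 rfl
    have hq_pos : 0 < q := hpq.symm.pos
    have hfnn : (0:Ω → ℝ) ≤ᵐ[P] fun z => Y z ^ p :=
      Filter.Eventually.of_forall fun z => by simp [pow_nonneg (hYnn z) p]
    have hgnn : (0:Ω → ℝ) ≤ᵐ[P] fun z => if t < Y z then (1:ℝ) else 0 :=
      Filter.Eventually.of_forall fun z => by by_cases h : t < Y z <;> simp [h]
    have hfmem : MemLp (fun z => Y z ^ p) (ENNReal.ofReal (m:ℝ)) P := by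
      have hne0 : ENNReal.ofReal (m:ℝ) ≠ 0 := by
        simp only [ne_eq, ENNReal.ofReal_eq_zero, not_le]; positivity
      have hnetop : ENNReal.ofReal (m:ℝ) ≠ ⊤ := ENNReal.ofReal_ne_top
      rw [← memLp_norm_rpow_iff ((hY.pow_const p).aestronglyMeasurable) hne0 hnetop,
        ENNReal.div_self hne0 hnetop, memLp_one_iff_integrable]
      apply hYmp.congr
      filter_upwards with z
      rw [ENNReal.toReal_ofReal (by positivity : (0:ℝ) ≤ (m:ℝ)),
        Real.norm_eq_abs, abs_of_nonneg (pow_nonneg (hYnn z) p), Real.rpow_natCast]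
      ring
    have hgmem : MemLp (fun z => if t < Y z then (1:ℝ) else 0) (ENNReal.ofReal q) P := by
      have htop : MemLp (fun z => if t < Y z then (1:ℝ) else 0) ⊤ P := by
        refine memLp_top_of_bound ((Measurable.ite (measurableSet_lt measurable_const hY)
          measurable_const measurable_const).aestronglyMeasurable) 1 ?_
        filter_upwards with z
        by_cases h : t < Y z <;> simp [h]
      exact htop.mono_exponent le_top
    have hHolder := integral_mul_le_Lp_mul_Lq_of_nonneg hpq hfnn hgnn hfmem hgmem
    have e1 : ∫ z, (Y z ^ p) ^ ((m:ℝ)) ∂P = ∫ z, Y z ^ (m * p) ∂P := by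
      refine integral_congr_ae (Filter.Eventually.of_forall fun z => ?_)
      simp only [Real.rpow_natCast]
      ring
    have e2 : ∫ z, (if t < Y z then (1:ℝ) else 0) ^ q ∂P
        = ∫ z, (if t < Y z then (1:ℝ) else 0) ∂P := by
      refine integral_congr_ae (Filter.Eventually.of_forall fun z => ?_)
      by_cases h : t < Y z
      · simp [h]
      · simp [h, Real.zero_rpow hq_pos.ne']
    rw [e1, e2] at hHolder
    have hmarkov := aux_markov P Y m hYnn hYm t ht
    have hind_nn : (0:ℝ) ≤ ∫ z, (if t < Y z then (1:ℝ) else 0) ∂P :=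
      integral_nonneg fun z => by by_cases h : t < Y z <;> simp [h]
    have h1q : 1 / q = ((m:ℝ) - 1) / (m:ℝ) := by
      rw [hq, one_div_div]
    have step2 : (∫ z, (if t < Y z then (1:ℝ) else 0) ∂P) ^ (1/q)
        ≤ ((∫ z, Y z ^ m ∂P) / t ^ m) ^ (1/q) :=
      Real.rpow_le_rpow hind_nn hmarkov hpq.symm.one_div_nonneg
    have hc : ((m - 1 : ℕ) : ℝ) = (m:ℝ) - 1 := by
      rw [Nat.cast_sub hm1, Nat.cast_one]
    have htp : ((t ^ m : ℝ)) ^ (((m:ℝ) - 1)/(m:ℝ)) = t ^ (m - 1) := by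
      rw [← Real.rpow_natCast t m, ← Real.rpow_mul ht.le, ← Real.rpow_natCast t (m-1), hc]
      congr 1
      field_simp
    have e3 : ((∫ z, Y z ^ m ∂P) / t ^ m) ^ (1/q)
        = (∫ z, Y z ^ m ∂P) ^ (((m:ℝ) - 1) / (m:ℝ)) * (1 / t) ^ (m - 1) := by
      rw [h1q, Real.div_rpow hμm_nn (pow_nonneg ht.le m), htp, one_div, inv_pow, div_eq_mul_inv]
    calc ∫ z, Y z ^ p * (if t < Y z then (1:ℝ) else 0) ∂P
        ≤ (∫ z, Y z ^ (m*p) ∂P) ^ (1/(m:ℝ)) *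
            (∫ z, (if t < Y z then (1:ℝ) else 0) ∂P) ^ (1/q) := hHolder
      _ ≤ (∫ z, Y z ^ (m*p) ∂P) ^ (1/(m:ℝ)) * (((∫ z, Y z ^ m ∂P) / t ^ m) ^ (1/q)) := by
          gcongr
      _ = (∫ z, Y z ^ m ∂P) ^ (((m : ℝ) - 1) / (m : ℝ)) * (∫ z, Y z ^ (m * p) ∂P) ^ (1 / (m : ℝ)) *
            (1 / t) ^ (m - 1) := by
          rw [e3]; ring


private lemma aux_core {Ω : Type*} [MeasurableSpace Ω] (P : Measure Ω) [IsProbabilityMeasure P]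
    (η₁ η₂ : Ω → ℝ) (hη₁ : Measurable η₁) (hη₂ : Measurable η₂)
    (hindep : IndepFun η₁ η₂ P) (ω α k : ℝ) (hω : 0 < ω) (hα : 0 ≤ α) (hk : 0 < k)
    (p m : ℕ) (hp : 1 ≤ p) (hm1 : 1 ≤ m)
    (hμ2p : Integrable (fun z => ((η₁ z) ^ 2) ^ p) P)
    (hμ2p' : Integrable (fun z => ((η₂ z) ^ 2) ^ p) P)
    (hμ2m : Integrable (fun z => ((η₁ z) ^ 2) ^ m) P)
    (hμ2mp : Integrable (fun z => ((η₁ z) ^ 2) ^ (m * p)) P)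
    (hZY : ∫ z, ((η₂ z) ^ 2) ^ p ∂P = ∫ z, ((η₁ z) ^ 2) ^ p ∂P)
    (x₁ : ℝ) (hx : 0 < x₁) :
    ∫ z, ((η₂ z) ^ 2) ^ p *
        (ω + α * ((ω + α * x₁) * (η₁ z) ^ 2) *
          (if k * x₁ < (ω + α * x₁) * (η₁ z) ^ 2 then (1:ℝ) else 0)) ^ p ∂P ≤
      (∫ z, ((η₁ z) ^ 2) ^ p ∂P) *
        (ω ^ p + (ω * (ω / (k * x₁) + α / k) + α * ω + α ^ 2 * x₁) ^ p *
          ((∫ z, ((η₁ z) ^ 2) ^ m ∂P) ^ (((m : ℝ) - 1) / (m : ℝ)) *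
            (∫ z, ((η₁ z) ^ 2) ^ (m * p) ∂P) ^ (1 / (m : ℝ))) *
          (ω / (k * x₁) + α / k) ^ (m - 1)) := by
  have hYnn : ∀ z, (0:ℝ) ≤ (η₁ z) ^ 2 := fun z => sq_nonneg _
  have hY : Measurable fun z => (η₁ z) ^ 2 := hη₁.pow_const 2
  set a : ℝ := ω + α * x₁ with ha_def
  have ha : 0 < a := by positivity
  set t : ℝ := k * x₁ / a with ht_def
  have ht : 0 < t := by positivity
  set r : ℝ := ω / (k * x₁) + α / k with hr_def
  have hr_t : 1 / t = r := by
    rw [ht_def, hr_def, one_div_div, ha_def]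
    field_simp
  have hrpos : 0 < r := by rw [← hr_t]; positivity
  set s : ℝ := ω * r + α * ω + α ^ 2 * x₁ with hs_def
  have hs_eq : s = ω / t + α * a := by
    rw [hs_def, ha_def, div_eq_mul_inv, ← one_div, hr_t]
    ring
  have hs_nn : 0 ≤ s := by rw [hs_eq]; positivity
  set K : ℝ := (∫ z, ((η₁ z) ^ 2) ^ m ∂P) ^ (((m : ℝ) - 1) / (m : ℝ)) *
      (∫ z, ((η₁ z) ^ 2) ^ (m * p) ∂P) ^ (1 / (m : ℝ)) with hK_def
  have hμm_nn : (0:ℝ) ≤ ∫ z, ((η₁ z) ^ 2) ^ m ∂P :=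
    integral_nonneg fun z => pow_nonneg (hYnn z) m
  have hμmp_nn : (0:ℝ) ≤ ∫ z, ((η₁ z) ^ 2) ^ (m * p) ∂P :=
    integral_nonneg fun z => pow_nonneg (hYnn z) _
  have hK_nn : 0 ≤ K := mul_nonneg (Real.rpow_nonneg hμm_nn _) (Real.rpow_nonneg hμmp_nn _)
  have hμp_nn : (0:ℝ) ≤ ∫ z, ((η₁ z) ^ 2) ^ p ∂P :=
    integral_nonneg fun z => pow_nonneg (hYnn z) p
  -- the indicator condition
  have hiff : ∀ z, (k * x₁ < a * (η₁ z) ^ 2) ↔ (t < (η₁ z) ^ 2) := by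
    intro z
    rw [ht_def, div_lt_iff₀ ha, mul_comm ((η₁ z)^2) a]
  -- pointwise bound
  have hpt : ∀ z, ((η₂ z) ^ 2) ^ p *
      (ω + α * (a * (η₁ z) ^ 2) * (if k * x₁ < a * (η₁ z) ^ 2 then (1:ℝ) else 0)) ^ p ≤
      ω ^ p * ((η₂ z) ^ 2) ^ p +
        s ^ p * (((η₂ z) ^ 2) ^ p *
          (((η₁ z) ^ 2) ^ p * (if t < (η₁ z) ^ 2 then (1:ℝ) else 0))) := by
    intro z
    have hZnn : (0:ℝ) ≤ ((η₂ z) ^ 2) ^ p := pow_nonneg (sq_nonneg _) p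
    by_cases h : t < (η₁ z) ^ 2
    · rw [if_pos ((hiff z).mpr h), if_pos h]
      have hW : ω + α * (a * (η₁ z) ^ 2) * 1 ≤ s * (η₁ z) ^ 2 := by
        have h1 : ω ≤ ω / t * (η₁ z) ^ 2 := by
          rw [div_mul_eq_mul_div, le_div_iff₀ ht]
          exact mul_le_mul_of_nonneg_left h.le hω.le
        rw [hs_eq]
        nlinarith [hYnn z]
      have hWnn : (0:ℝ) ≤ ω + α * (a * (η₁ z) ^ 2) * 1 := by positivity
      have := pow_le_pow_left₀ hWnn hW p
      calc ((η₂ z) ^ 2) ^ p * (ω + α * (a * (η₁ z) ^ 2) * 1) ^ p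
          ≤ ((η₂ z) ^ 2) ^ p * (s * (η₁ z) ^ 2) ^ p := by
            exact mul_le_mul_of_nonneg_left this hZnn
        _ = s ^ p * (((η₂ z) ^ 2) ^ p * (((η₁ z) ^ 2) ^ p * 1)) := by
            rw [mul_pow]; ring
        _ ≤ ω ^ p * ((η₂ z) ^ 2) ^ p +
              s ^ p * (((η₂ z) ^ 2) ^ p * (((η₁ z) ^ 2) ^ p * 1)) := by
            have : (0:ℝ) ≤ ω ^ p * ((η₂ z) ^ 2) ^ p := by positivity
            linarith
    · rw [if_neg (fun hc => h ((hiff z).mp hc)), if_neg h]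
      simp only [mul_zero, add_zero]
      exact le_of_eq (mul_comm _ _)
  -- measurability / integrability
  have hind_meas : Measurable fun z => (if t < (η₁ z) ^ 2 then (1:ℝ) else 0) :=
    Measurable.ite (measurableSet_lt measurable_const hY) measurable_const measurable_const
  have hYpind_int : Integrable (fun z => ((η₁ z) ^ 2) ^ p *
      (if t < (η₁ z) ^ 2 then (1:ℝ) else 0)) P := by
    refine hμ2p.mono' ((hY.pow_const p).mul hind_meas).aestronglyMeasurable ?_
    filter_upwards with z
    rw [Real.norm_eq_abs]
    by_cases h : t < (η₁ z) ^ 2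
    · rw [if_pos h, mul_one, abs_of_nonneg (pow_nonneg (hYnn z) p)]
    · rw [if_neg h, mul_zero, abs_zero]
      exact pow_nonneg (hYnn z) p
  have hindZ : IndepFun (fun z => ((η₂ z) ^ 2) ^ p)
      (fun z => ((η₁ z) ^ 2) ^ p * (if t < (η₁ z) ^ 2 then (1:ℝ) else 0)) P := by
    have hφ : Measurable fun v : ℝ => (v ^ 2) ^ p := (measurable_id.pow_const 2).pow_const p
    have hψm : Measurable fun v : ℝ => (v ^ 2) ^ p * (if t < v ^ 2 then (1:ℝ) else 0) :=
      ((measurable_id.pow_const 2).pow_const p).mul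
        (Measurable.ite (measurableSet_lt measurable_const (measurable_id.pow_const 2))
          measurable_const measurable_const)
    exact hindep.symm.comp hφ hψm
  have hmul_int : Integrable (fun z => ((η₂ z) ^ 2) ^ p *
      (((η₁ z) ^ 2) ^ p * (if t < (η₁ z) ^ 2 then (1:ℝ) else 0))) P :=
    hindZ.integrable_mul hμ2p' hYpind_int
  -- integrate the pointwise bound
  have hstep : ∫ z, ((η₂ z) ^ 2) ^ p *
      (ω + α * (a * (η₁ z) ^ 2) * (if k * x₁ < a * (η₁ z) ^ 2 then (1:ℝ) else 0)) ^ p ∂P ≤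
      ∫ z, (ω ^ p * ((η₂ z) ^ 2) ^ p +
        s ^ p * (((η₂ z) ^ 2) ^ p *
          (((η₁ z) ^ 2) ^ p * (if t < (η₁ z) ^ 2 then (1:ℝ) else 0)))) ∂P := by
    refine integral_mono_of_nonneg ?_ ((hμ2p'.const_mul _).add (hmul_int.const_mul _)) ?_
    · filter_upwards with z
      have h1 : (0:ℝ) ≤ α * (a * (η₁ z) ^ 2) * (if k * x₁ < a * (η₁ z) ^ 2 then (1:ℝ) else 0) := by
        have := hYnn z
        positivity
      have h2 : (0:ℝ) ≤ ω + α * (a * (η₁ z) ^ 2) *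
          (if k * x₁ < a * (η₁ z) ^ 2 then (1:ℝ) else 0) := by linarith
      exact mul_nonneg (pow_nonneg (sq_nonneg _) p) (pow_nonneg h2 p)
    · filter_upwards with z
      exact hpt z
  have hsplit : ∫ z, (ω ^ p * ((η₂ z) ^ 2) ^ p +
        s ^ p * (((η₂ z) ^ 2) ^ p *
          (((η₁ z) ^ 2) ^ p * (if t < (η₁ z) ^ 2 then (1:ℝ) else 0)))) ∂P =
      ω ^ p * (∫ z, ((η₂ z) ^ 2) ^ p ∂P) +
        s ^ p * ((∫ z, ((η₂ z) ^ 2) ^ p ∂P) *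
          (∫ z, ((η₁ z) ^ 2) ^ p * (if t < (η₁ z) ^ 2 then (1:ℝ) else 0) ∂P)) := by
    have hmm : ∫ z, ((η₂ z) ^ 2) ^ p *
        (((η₁ z) ^ 2) ^ p * (if t < (η₁ z) ^ 2 then (1:ℝ) else 0)) ∂P =
        (∫ z, ((η₂ z) ^ 2) ^ p ∂P) *
          (∫ z, ((η₁ z) ^ 2) ^ p * (if t < (η₁ z) ^ 2 then (1:ℝ) else 0) ∂P) := by
      have h := hindZ.integral_mul_eq_mul_integral hμ2p'.aestronglyMeasurable hYpind_int.aestronglyMeasurable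
      exact h
    rw [integral_add (hμ2p'.const_mul _) (hmul_int.const_mul _), integral_const_mul,
      integral_const_mul, hmm]
  have hHolder := aux_holder P (fun z => (η₁ z) ^ 2) hY hYnn p m hm1 hμ2m hμ2mp t ht
  rw [hr_t] at hHolder
  have hfinal : ω ^ p * (∫ z, ((η₂ z) ^ 2) ^ p ∂P) +
        s ^ p * ((∫ z, ((η₂ z) ^ 2) ^ p ∂P) *
          (∫ z, ((η₁ z) ^ 2) ^ p * (if t < (η₁ z) ^ 2 then (1:ℝ) else 0) ∂P)) ≤
      (∫ z, ((η₁ z) ^ 2) ^ p ∂P) * (ω ^ p + s ^ p * K * r ^ (m - 1)) := by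
    rw [hZY]
    have h2 : s ^ p * ((∫ z, ((η₁ z) ^ 2) ^ p ∂P) *
        (∫ z, ((η₁ z) ^ 2) ^ p * (if t < (η₁ z) ^ 2 then (1:ℝ) else 0) ∂P)) ≤
        s ^ p * ((∫ z, ((η₁ z) ^ 2) ^ p ∂P) * (K * r ^ (m - 1))) := by
      refine mul_le_mul_of_nonneg_left (mul_le_mul_of_nonneg_left ?_ hμp_nn)
        (pow_nonneg hs_nn p)
      rw [hK_def]
      exact hHolder
    have h3 : (∫ z, ((η₁ z) ^ 2) ^ p ∂P) * (ω ^ p + s ^ p * K * r ^ (m - 1)) =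
        ω ^ p * (∫ z, ((η₁ z) ^ 2) ^ p ∂P) +
          s ^ p * ((∫ z, ((η₁ z) ^ 2) ^ p ∂P) * (K * r ^ (m - 1))) := by ring
    rw [h3]
    linarith
  calc ∫ z, ((η₂ z) ^ 2) ^ p *
        (ω + α * (a * (η₁ z) ^ 2) * (if k * x₁ < a * (η₁ z) ^ 2 then (1:ℝ) else 0)) ^ p ∂P
      ≤ _ := hstep
    _ = _ := hsplit
    _ ≤ (∫ z, ((η₁ z) ^ 2) ^ p ∂P) * (ω ^ p + s ^ p * K * r ^ (m - 1)) := hfinal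


/-- Drift condition for the existence of `2p`-th order moments: under Assumption A with
`k > 0`, if for some integer `m ≥ 1`
`α^{2p+m-1} μ_{2p} μ_{2m}^{(m-1)/m} μ_{2mp}^{1/m} < k^{m-1}` (condition (3.7)), then
there are `β, M, b > 0` such that, with `C = [0,M]² ∪ {x₁ ≤ k x₂}`,
`E[(η₂²)^p ψ(ψ(x) η₁², x₁)^p] ≤ (1-β) x₁^p - β` outside `C` and `≤ b` on `C`. -/
theorem stmt17
    {Ω' : Type*} [MeasurableSpace Ω'] (P : Measure Ω') [IsProbabilityMeasure P]
    (ω α k : ℝ) (hω : 0 < ω) (hα : 0 ≤ α) (hk : 0 < k)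
    (ψ : ℝ → ℝ → ℝ)
    (hψ : ∀ x₁ x₂, ψ x₁ x₂ = ω + α * x₁ * (if k * x₂ < x₁ then 1 else 0))
    (η₁ η₂ : Ω' → ℝ) (hη₁ : Measurable η₁) (hη₂ : Measurable η₂)
    (hindep : IndepFun η₁ η₂ P)
    (f : ℝ → ℝ≥0∞) (hf : Measurable f) (hfpos : ∀ x, 0 ≤ x → 0 < f x)
    (hd₁ : Measure.map (fun z => (η₁ z) ^ 2) P = (volume.restrict (Ici (0 : ℝ))).withDensity f)
    (hd₂ : Measure.map (fun z => (η₂ z) ^ 2) P = (volume.restrict (Ici (0 : ℝ))).withDensity f)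
    (hint₁ : Integrable η₁ P) (hint₂ : Integrable η₂ P)
    (hm₁ : ∫ z, η₁ z ∂P = 0) (hm₂ : ∫ z, η₂ z ∂P = 0)
    (hv₁ : ∫ z, (η₁ z) ^ 2 ∂P = 1) (hv₂ : ∫ z, (η₂ z) ^ 2 ∂P = 1)
    (p : ℕ) (hp : 1 ≤ p) (m : ℕ) (hm1 : 1 ≤ m)
    (hμ2p : Integrable (fun z => ((η₁ z) ^ 2) ^ p) P)
    (hμ2p' : Integrable (fun z => ((η₂ z) ^ 2) ^ p) P)
    (hμ2m : Integrable (fun z => ((η₁ z) ^ 2) ^ m) P)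
    (hμ2mp : Integrable (fun z => ((η₁ z) ^ 2) ^ (m * p)) P)
    (hcond : α ^ (2 * p + m - 1) * (∫ z, ((η₁ z) ^ 2) ^ p ∂P) *
        (∫ z, ((η₁ z) ^ 2) ^ m ∂P) ^ (((m : ℝ) - 1) / (m : ℝ)) *
        (∫ z, ((η₁ z) ^ 2) ^ (m * p) ∂P) ^ (1 / (m : ℝ)) < k ^ (m - 1)) :
    ∃ β > (0 : ℝ), ∃ M > (0 : ℝ), ∃ b > (0 : ℝ),
      ∀ x₁ x₂ : ℝ, 0 ≤ x₁ → 0 ≤ x₂ →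
        (¬((x₁ ≤ M ∧ x₂ ≤ M) ∨ x₁ ≤ k * x₂) →
          ∫ z, ((η₂ z) ^ 2) ^ p * (ψ (ψ x₁ x₂ * (η₁ z) ^ 2) x₁) ^ p ∂P ≤
            (1 - β) * x₁ ^ p - β) ∧
        (((x₁ ≤ M ∧ x₂ ≤ M) ∨ x₁ ≤ k * x₂) →
          ∫ z, ((η₂ z) ^ 2) ^ p * (ψ (ψ x₁ x₂ * (η₁ z) ^ 2) x₁) ^ p ∂P ≤ b) := by
  have hYnn : ∀ z, (0:ℝ) ≤ (η₁ z) ^ 2 := fun z => sq_nonneg _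
  have hp0 : p ≠ 0 := by omega
  -- the two squared noises have the same distribution, hence the same moments
  have hZY : ∫ z, ((η₂ z) ^ 2) ^ p ∂P = ∫ z, ((η₁ z) ^ 2) ^ p ∂P := by
    have h2 := integral_map (μ := P) ((hη₂.pow_const 2).aemeasurable)
      (f := fun y : ℝ => y ^ p) (measurable_id.pow_const p).aestronglyMeasurable
    have h1 := integral_map (μ := P) ((hη₁.pow_const 2).aemeasurable)
      (f := fun y : ℝ => y ^ p) (measurable_id.pow_const p).aestronglyMeasurable
    rw [← h2, ← h1, hd₁, hd₂]
  set μp := ∫ z, ((η₁ z) ^ 2) ^ p ∂P with hμp_def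
  set μm := ∫ z, ((η₁ z) ^ 2) ^ m ∂P with hμm_def
  set μmp := ∫ z, ((η₁ z) ^ 2) ^ (m * p) ∂P with hμmp_def
  have hμp_nn : 0 ≤ μp := integral_nonneg fun z => pow_nonneg (hYnn z) p
  have hμm_nn : 0 ≤ μm := integral_nonneg fun z => pow_nonneg (hYnn z) m
  have hμmp_nn : 0 ≤ μmp := integral_nonneg fun z => pow_nonneg (hYnn z) _
  set K := μm ^ (((m : ℝ) - 1) / (m : ℝ)) * μmp ^ (1 / (m : ℝ)) with hK_def
  have hK_nn : 0 ≤ K := mul_nonneg (Real.rpow_nonneg hμm_nn _) (Real.rpow_nonneg hμmp_nn _)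
  set L := μp * (α ^ 2) ^ p * K * (α / k) ^ (m - 1) with hL_def
  have hkm : (0:ℝ) < k ^ (m - 1) := pow_pos hk _
  have hL1 : L < 1 := by
    have hLe : L = (α ^ (2 * p + m - 1) * μp * μm ^ (((m : ℝ) - 1) / (m : ℝ)) *
        μmp ^ (1 / (m : ℝ))) / k ^ (m - 1) := by
      rw [hL_def, hK_def, show 2 * p + m - 1 = 2 * p + (m - 1) from by omega, pow_add,
        pow_mul, div_pow]
      ring
    rw [hLe, div_lt_one hkm]
    exact hcond
  set β := (1 - L) / 4 with hβ_def
  have hβpos : 0 < β := by rw [hβ_def]; linarith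
  -- asymptotic functions
  set R : ℝ → ℝ := fun x => ω / (k * x) + α / k with hR_def
  set g : ℝ → ℝ := fun x => μp * ((ω / x) ^ p +
      ((ω * R x + α * ω + α ^ 2 * x) / x) ^ p * K * (R x) ^ (m - 1)) with hg_def
  have hR_tend : Tendsto R atTop (𝓝 (α / k)) := by
    have h1 : Tendsto (fun x : ℝ => ω / (k * x)) atTop (𝓝 0) :=
      tendsto_const_nhds.div_atTop (tendsto_id.const_mul_atTop hk)
    have := h1.add (tendsto_const_nhds (x := α / k))
    rw [hR_def]
    simpa using this
  have hg_tend : Tendsto g atTop (𝓝 L) := by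
    have hA : Tendsto (fun x : ℝ => ω / x) atTop (𝓝 0) :=
      tendsto_const_nhds.div_atTop tendsto_id
    have hB : Tendsto (fun x : ℝ => ω * R x / x + α * ω / x + α ^ 2) atTop (𝓝 (α ^ 2)) := by
      have t1 : Tendsto (fun x : ℝ => ω * R x / x) atTop (𝓝 0) :=
        (tendsto_const_nhds.mul hR_tend).div_atTop tendsto_id
      have t2 : Tendsto (fun x : ℝ => α * ω / x) atTop (𝓝 0) :=
        tendsto_const_nhds.div_atTop tendsto_id
      have := (t1.add t2).add (tendsto_const_nhds (x := α ^ 2))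
      simpa using this
    have hg' : Tendsto (fun x : ℝ => μp * ((ω / x) ^ p +
        (ω * R x / x + α * ω / x + α ^ 2) ^ p * K * (R x) ^ (m - 1))) atTop
        (𝓝 (μp * ((0:ℝ) ^ p + (α ^ 2) ^ p * K * (α / k) ^ (m - 1)))) :=
      tendsto_const_nhds.mul (((hA.pow p).add
        (((hB.pow p).mul tendsto_const_nhds).mul (hR_tend.pow (m - 1)))))
    have hVL : μp * ((0:ℝ) ^ p + (α ^ 2) ^ p * K * (α / k) ^ (m - 1)) = L := by
      rw [hL_def, zero_pow hp0]
      ring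
    rw [hVL] at hg'
    refine Tendsto.congr' ?_ hg'
    filter_upwards [eventually_gt_atTop (0:ℝ)] with x hx
    have hx0 : x ≠ 0 := hx.ne'
    have hdiv : (ω * R x + α * ω + α ^ 2 * x) / x = ω * R x / x + α * ω / x + α ^ 2 := by
      rw [add_div, add_div, mul_div_assoc (α ^ 2), div_self hx0, mul_one]
    simp only [hg_def]
    rw [hdiv]
  have hev : ∀ᶠ x in atTop, g x ≤ 1 - 2 * β :=
    hg_tend.eventually_le_const (by rw [hβ_def]; linarith)
  obtain ⟨M₀, hM₀⟩ := eventually_atTop.mp hev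
  set Mb := max M₀ 1 with hMb_def
  set M := max Mb (Mb / k) with hM_def
  have hMb1 : (1:ℝ) ≤ Mb := le_max_right _ _
  have hMpos : 0 < M := lt_of_lt_of_le one_pos (le_trans hMb1 (le_max_left _ _))
  set c := α * (ω + α * M) with hc_def
  have hc_nn : 0 ≤ c := by rw [hc_def]; positivity
  set b' := ∫ z, ((η₂ z) ^ 2) ^ p * (ω + c * (η₁ z) ^ 2) ^ p ∂P with hb'_def
  refine ⟨β, hβpos, M, hMpos, max b' 1, lt_of_lt_of_le one_pos (le_max_right _ _), ?_⟩
  intro x₁ x₂ hx₁ hx₂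
  constructor
  · -- drift bound outside C
    intro hout
    push_neg at hout
    obtain ⟨hnot, hgt⟩ := hout
    have hgt' : k * x₂ < x₁ := hgt
    have hx₁big : Mb < x₁ := by
      by_cases hM1 : x₁ ≤ M
      case neg =>
        push_neg at hM1
        exact lt_of_le_of_lt (le_max_left _ _) hM1
      case pos =>
        have h := hnot hM1
        have h1 : Mb / k ≤ M := le_max_right _ _
        have h2 : Mb ≤ k * M := by
          calc Mb = k * (Mb / k) := by field_simp
            _ ≤ k * M := by
                have := mul_le_mul_of_nonneg_left h1 hk.le
                linarith
        have h3 : k * M < k * x₂ := by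
          exact mul_lt_mul_of_pos_left h hk
        linarith
    have hx₁1 : (1:ℝ) ≤ x₁ := le_of_lt (lt_of_le_of_lt hMb1 hx₁big)
    have hx₁pos : (0:ℝ) < x₁ := lt_of_lt_of_le one_pos hx₁1
    have hψx : ψ x₁ x₂ = ω + α * x₁ := by
      rw [hψ, if_pos hgt', mul_one]
    have hcore := aux_core P η₁ η₂ hη₁ hη₂ hindep ω α k hω hα hk p m hp hm1
      hμ2p hμ2p' hμ2m hμ2mp hZY x₁ hx₁pos
    have hgM : g x₁ ≤ 1 - 2 * β := hM₀ x₁ (le_of_lt (lt_of_le_of_lt (le_max_left _ _) hx₁big))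
    have hxp1 : (1:ℝ) ≤ x₁ ^ p := by
      have := pow_le_pow_left₀ (by norm_num : (0:ℝ) ≤ 1) hx₁1 p
      simpa using this
    have hxpnn : (0:ℝ) ≤ x₁ ^ p := by positivity
    have hident : μp * (ω ^ p + (ω * R x₁ + α * ω + α ^ 2 * x₁) ^ p * K * (R x₁) ^ (m - 1)) =
        g x₁ * x₁ ^ p := by
      have e : ∀ A : ℝ, (A / x₁) ^ p * x₁ ^ p = A ^ p := fun A => by
        rw [div_pow, div_mul_cancel₀]
        exact pow_ne_zero p hx₁pos.ne'
      have expand : g x₁ * x₁ ^ p = μp * ((ω / x₁) ^ p * x₁ ^ p +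
          ((ω * R x₁ + α * ω + α ^ 2 * x₁) / x₁) ^ p * x₁ ^ p * K * (R x₁) ^ (m - 1)) := by
        rw [hg_def]
        ring
      rw [expand, e ω, e (ω * R x₁ + α * ω + α ^ 2 * x₁)]
    calc ∫ z, ((η₂ z) ^ 2) ^ p * (ψ (ψ x₁ x₂ * (η₁ z) ^ 2) x₁) ^ p ∂P
        = ∫ z, ((η₂ z) ^ 2) ^ p *
            (ω + α * ((ω + α * x₁) * (η₁ z) ^ 2) *
              (if k * x₁ < (ω + α * x₁) * (η₁ z) ^ 2 then (1:ℝ) else 0)) ^ p ∂P := by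
          simp only [hψx, hψ]
      _ ≤ μp * (ω ^ p + (ω * (ω / (k * x₁) + α / k) + α * ω + α ^ 2 * x₁) ^ p *
            (μm ^ (((m : ℝ) - 1) / (m : ℝ)) * μmp ^ (1 / (m : ℝ))) *
            (ω / (k * x₁) + α / k) ^ (m - 1)) := hcore
      _ = μp * (ω ^ p + (ω * R x₁ + α * ω + α ^ 2 * x₁) ^ p * K * (R x₁) ^ (m - 1)) := by
          rw [hK_def, hR_def]
      _ = g x₁ * x₁ ^ p := hident
      _ ≤ (1 - 2 * β) * x₁ ^ p := mul_le_mul_of_nonneg_right hgM hxpnn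
      _ ≤ (1 - β) * x₁ ^ p - β := by
          have hβX : β * 1 ≤ β * x₁ ^ p := mul_le_mul_of_nonneg_left hxp1 hβpos.le
          nlinarith
  · -- bound on C
    intro hin
    have hψx_nn : 0 ≤ ψ x₁ x₂ := by
      rw [hψ]
      have : (0:ℝ) ≤ α * x₁ * (if k * x₂ < x₁ then (1:ℝ) else 0) := by
        by_cases h : k * x₂ < x₁ <;> simp [h] <;> positivity
      linarith
    have hψx_le : ψ x₁ x₂ ≤ ω + α * M := by
      rw [hψ]
      by_cases h : k * x₂ < x₁
      · rw [if_pos h, mul_one]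
        rcases hin with ⟨hxM, _⟩ | hle
        · have := mul_le_mul_of_nonneg_left hxM hα
          linarith
        · exact absurd hle (not_le.mpr h)
      · rw [if_neg h, mul_zero, add_zero]
        nlinarith [mul_nonneg hα hMpos.le]
    have hdom : Integrable (fun z => ((η₂ z) ^ 2) ^ p * (ω + c * (η₁ z) ^ 2) ^ p) P := by
      have hφ : Measurable fun v : ℝ => (v ^ 2) ^ p := (measurable_id.pow_const 2).pow_const p
      have hψc : Measurable fun v : ℝ => (ω + c * v ^ 2) ^ p :=
        (measurable_const.add ((measurable_id.pow_const 2).const_mul c)).pow_const p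
      have hindc : IndepFun (fun z => ((η₂ z) ^ 2) ^ p)
          (fun z => (ω + c * (η₁ z) ^ 2) ^ p) P := hindep.symm.comp hφ hψc
      have hWc_int : Integrable (fun z => (ω + c * (η₁ z) ^ 2) ^ p) P := by
        refine (((integrable_const (1:ℝ)).add hμ2p).const_mul ((ω + c) ^ p * 2 ^ p)).mono'
          ((measurable_const.add ((hη₁.pow_const 2).const_mul c)).pow_const p).aestronglyMeasurable ?_
        filter_upwards with z
        have hY := hYnn z
        have h0 : (0:ℝ) ≤ ω + c * (η₁ z) ^ 2 := by positivity
        rw [Real.norm_eq_abs, abs_of_nonneg (pow_nonneg h0 p)]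
        have h1 : ω + c * (η₁ z) ^ 2 ≤ (ω + c) * (1 + (η₁ z) ^ 2) := by nlinarith
        have h2 : (ω + c * (η₁ z) ^ 2) ^ p ≤ ((ω + c) * (1 + (η₁ z) ^ 2)) ^ p :=
          pow_le_pow_left₀ h0 h1 p
        have h3 : (1 + (η₁ z) ^ 2) ^ p ≤ 2 ^ p * (1 + ((η₁ z) ^ 2) ^ p) := by
          by_cases hY1 : (η₁ z) ^ 2 ≤ 1
          · have h4 : (1 + (η₁ z) ^ 2) ^ p ≤ 2 ^ p :=
              pow_le_pow_left₀ (by linarith) (by linarith) p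
            nlinarith [pow_nonneg hY p, pow_nonneg (by norm_num : (0:ℝ) ≤ 2) p]
          · push_neg at hY1
            have h4 : (1 + (η₁ z) ^ 2) ^ p ≤ (2 * (η₁ z) ^ 2) ^ p :=
              pow_le_pow_left₀ (by linarith) (by linarith) p
            rw [mul_pow] at h4
            nlinarith [pow_nonneg (by norm_num : (0:ℝ) ≤ 2) p]
        calc (ω + c * (η₁ z) ^ 2) ^ p ≤ ((ω + c) * (1 + (η₁ z) ^ 2)) ^ p := h2
          _ = (ω + c) ^ p * (1 + (η₁ z) ^ 2) ^ p := mul_pow _ _ _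
          _ ≤ (ω + c) ^ p * (2 ^ p * (1 + ((η₁ z) ^ 2) ^ p)) :=
              mul_le_mul_of_nonneg_left h3 (by positivity)
          _ = (ω + c) ^ p * 2 ^ p * (1 + ((η₁ z) ^ 2) ^ p) := by ring
      exact hindc.integrable_mul hμ2p' hWc_int
    refine le_trans (integral_mono_of_nonneg ?_ hdom ?_) ?_
    · filter_upwards with z
      have h1 : 0 ≤ ψ x₁ x₂ * (η₁ z) ^ 2 := mul_nonneg hψx_nn (hYnn z)
      have h2 : 0 ≤ ψ (ψ x₁ x₂ * (η₁ z) ^ 2) x₁ := by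
        rw [hψ]
        have : (0:ℝ) ≤ α * (ψ x₁ x₂ * (η₁ z) ^ 2) *
            (if k * x₁ < ψ x₁ x₂ * (η₁ z) ^ 2 then (1:ℝ) else 0) := by
          by_cases h : k * x₁ < ψ x₁ x₂ * (η₁ z) ^ 2 <;> simp [h] <;> positivity
        linarith
      exact mul_nonneg (pow_nonneg (sq_nonneg _) p) (pow_nonneg h2 p)
    · filter_upwards with z
      have hY := hYnn z
      have h1 : 0 ≤ ψ x₁ x₂ * (η₁ z) ^ 2 := mul_nonneg hψx_nn hY
      have hWle : ψ (ψ x₁ x₂ * (η₁ z) ^ 2) x₁ ≤ ω + c * (η₁ z) ^ 2 := by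
        rw [hψ (ψ x₁ x₂ * (η₁ z) ^ 2) x₁]
        have h2 : α * (ψ x₁ x₂ * (η₁ z) ^ 2) *
            (if k * x₁ < ψ x₁ x₂ * (η₁ z) ^ 2 then (1:ℝ) else 0) ≤ c * (η₁ z) ^ 2 := by
          have h3 : α * (ψ x₁ x₂ * (η₁ z) ^ 2) ≤ c * (η₁ z) ^ 2 := by
            rw [hc_def]
            nlinarith [mul_le_mul_of_nonneg_right (mul_le_mul_of_nonneg_left hψx_le hα) hY]
          by_cases h : k * x₁ < ψ x₁ x₂ * (η₁ z) ^ 2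
          · rw [if_pos h, mul_one]; exact h3
          · rw [if_neg h, mul_zero]
            positivity
        linarith
      have hWnn : 0 ≤ ψ (ψ x₁ x₂ * (η₁ z) ^ 2) x₁ := by
        rw [hψ]
        have : (0:ℝ) ≤ α * (ψ x₁ x₂ * (η₁ z) ^ 2) *
            (if k * x₁ < ψ x₁ x₂ * (η₁ z) ^ 2 then (1:ℝ) else 0) := by
          by_cases h : k * x₁ < ψ x₁ x₂ * (η₁ z) ^ 2 <;> simp [h] <;> positivity
        linarith
      exact mul_le_mul_of_nonneg_left (pow_le_pow_left₀ hWnn hWle p)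
        (pow_nonneg (sq_nonneg _) p)
    · exact le_max_left _ _
end

section
/- Suppose 0 ≤ k ≤ 1, p is a positive integer, and (ε_t)_{t∈ℤ} is a strictly stationary solution of the model ε_t = σ_t η_t, σ_t² = ω + α ε_{t-1}² 1[ε_{t-1}² > k ε_{t-2}²] whose 2p-th moment c = E(ε_t^{2p}) is finite (and, by stationarity, the same for all t), where (η_t) is i.i.d. satisfying Assumption A with μ_{2p} = E[(η_t²)^p] < ∞ and η_t is independent of {ε_s : s < t}. Then necessarily μ_{2p}·α^p·(1 − k^p) < 1, and c ≥ μ_{2p}·ω^p / (1 − μ_{2p}·α^p·(1 − k^p)). -/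
open MeasureTheory ProbabilityTheory Set Filter
open scoped ENNReal

/-- Necessary condition for the existence of the `2p`-th moment when `0 ≤ k ≤ 1`:
if `(ε_t)_{t ∈ ℤ}` is a strictly stationary solution of
`ε_t = σ_t η_t`, `σ_t² = ω + α ε_{t-1}² 1_{ε_{t-1}² > k ε_{t-2}²}` with
`c = E ε_t^{2p} < ∞`, then `μ_{2p} α^p (1 - k^p) < 1` and
`c ≥ μ_{2p} ω^p / (1 - μ_{2p} α^p (1 - k^p))`. -/
theorem stmt19
    {Ω' : Type*} [MeasurableSpace Ω'] (P : Measure Ω') [IsProbabilityMeasure P]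
    (ω α k : ℝ) (hω : 0 < ω) (hα : 0 ≤ α) (hk0 : 0 ≤ k) (hk1 : k ≤ 1)
    (p : ℕ) (hp : 1 ≤ p)
    (η ε σ : ℤ → Ω' → ℝ)
    (hηmeas : ∀ t, Measurable (η t)) (hεmeas : ∀ t, Measurable (ε t))
    (hσmeas : ∀ t, Measurable (σ t))
    (hiid : iIndepFun η P)
    (f : ℝ → ℝ≥0∞) (hf : Measurable f) (hfpos : ∀ x, 0 ≤ x → 0 < f x)
    (hd : ∀ t, Measure.map (fun z => (η t z) ^ 2) P =
      (volume.restrict (Ici (0 : ℝ))).withDensity f)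
    (hint : ∀ t, Integrable (η t) P)
    (hmean : ∀ t, ∫ z, η t z ∂P = 0) (hvar : ∀ t, ∫ z, (η t z) ^ 2 ∂P = 1)
    (hμ2p : Integrable (fun z => ((η 0 z) ^ 2) ^ p) P)
    (hmodel : ∀ t z, ε t z = σ t z * η t z)
    (hσpos : ∀ t z, 0 ≤ σ t z)
    (hvol : ∀ t z, (σ t z) ^ 2 =
      ω + α * (ε (t - 1) z) ^ 2 *
        (if k * (ε (t - 2) z) ^ 2 < (ε (t - 1) z) ^ 2 then 1 else 0))
    (hpast : ∀ t : ℤ, Indep (MeasurableSpace.comap (η t) inferInstance)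
      (⨆ s : {s : ℤ // s < t}, MeasurableSpace.comap (ε s.1) inferInstance) P)
    (hstat : ∀ (n : ℕ) (t s : ℤ),
      Measure.map (fun z => fun i : Fin n => ε (t + i) z) P =
      Measure.map (fun z => fun i : Fin n => ε (s + i) z) P)
    (c : ℝ) (hcint : ∀ t, Integrable (fun z => (ε t z) ^ (2 * p)) P)
    (hc : ∀ t, ∫ z, (ε t z) ^ (2 * p) ∂P = c) :
    (∫ z, ((η 0 z) ^ 2) ^ p ∂P) * α ^ p * (1 - k ^ p) < 1 ∧
      (∫ z, ((η 0 z) ^ 2) ^ p ∂P) * ω ^ p /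
        (1 - (∫ z, ((η 0 z) ^ 2) ^ p ∂P) * α ^ p * (1 - k ^ p)) ≤ c := by
  have hp0 : p ≠ 0 := by omega
  set μ := ∫ z, ((η 0 z) ^ 2) ^ p ∂P with hμdef
  have hμ0 : 0 ≤ μ := integral_nonneg fun z => pow_nonneg (sq_nonneg _) p
  have hkp : k ^ p ≤ 1 := pow_le_one₀ hk0 hk1
  have hc0 : 0 ≤ c := by
    rw [← hc 0]
    exact integral_nonneg fun z => by
      rw [pow_mul]; exact pow_nonneg (sq_nonneg _) p
  -- indicator
  set χ : Ω' → ℝ :=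
    fun z => if k * (ε (0 - 2) z) ^ 2 < (ε (0 - 1) z) ^ 2 then 1 else 0 with hχdef
  have hχmeas : Measurable χ :=
    Measurable.ite
      (measurableSet_lt (((hεmeas _).pow_const 2).const_mul k) ((hεmeas _).pow_const 2))
      measurable_const measurable_const
  have hχ01 : ∀ z, 0 ≤ χ z ∧ χ z ≤ 1 := by
    intro z; simp only [hχdef]; split <;> norm_num
  -- independence of (η 0) and the pair (ε (-1), ε (-2))
  have hle : MeasurableSpace.comap (fun z => (ε (0 - 1) z, ε (0 - 2) z)) inferInstance ≤
      ⨆ s : {s : ℤ // s < 0}, MeasurableSpace.comap (ε s.1) inferInstance := by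
    have : (inferInstance : MeasurableSpace (ℝ × ℝ)) =
        MeasurableSpace.comap Prod.fst inferInstance ⊔
          MeasurableSpace.comap Prod.snd inferInstance := rfl
    rw [this, MeasurableSpace.comap_sup, MeasurableSpace.comap_comp,
      MeasurableSpace.comap_comp]
    refine sup_le ?_ ?_
    · exact le_iSup (fun s : {s : ℤ // s < 0} =>
        MeasurableSpace.comap (ε s.1) inferInstance) ⟨0 - 1, by decide⟩
    · exact le_iSup (fun s : {s : ℤ // s < 0} =>
        MeasurableSpace.comap (ε s.1) inferInstance) ⟨0 - 2, by decide⟩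
  have hIF : IndepFun (η 0) (fun z => (ε (0 - 1) z, ε (0 - 2) z)) P := by
    rw [IndepFun_iff_Indep]
    exact indep_of_indep_of_le_right (hpast 0) hle
  -- the function F
  set F : ℝ × ℝ → ℝ :=
    fun q => (ω + α * q.1 ^ 2 * (if k * q.2 ^ 2 < q.1 ^ 2 then 1 else 0)) ^ p with hFdef
  have hFmeas : Measurable F := by
    apply Measurable.pow_const
    apply Measurable.add measurable_const
    apply Measurable.mul (measurable_const.mul (measurable_fst.pow_const 2))
    exact Measurable.ite
      (measurableSet_lt ((measurable_snd.pow_const 2).const_mul k)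
        (measurable_fst.pow_const 2)) measurable_const measurable_const
  have hIF2 : IndepFun (fun z => ((σ 0 z) ^ 2) ^ p) (fun z => ((η 0 z) ^ 2) ^ p) P := by
    have h := (hIF.comp (φ := fun x : ℝ => (x ^ 2) ^ p) (ψ := F)
      ((measurable_id.pow_const 2).pow_const p) hFmeas).symm
    have e2 : F ∘ (fun z => (ε (0 - 1) z, ε (0 - 2) z)) = fun z => ((σ 0 z) ^ 2) ^ p := by
      funext z
      simp only [Function.comp_apply, hFdef]
      rw [← hvol 0 z]
    rwa [e2] at h
  have hprod : (fun z => ((σ 0 z) ^ 2) ^ p * ((η 0 z) ^ 2) ^ p) =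
      (fun z => (ε 0 z) ^ (2 * p)) := by
    funext z
    rw [pow_mul, hmodel 0 z, mul_pow, mul_pow]
  have hprodint : Integrable (fun z => ((σ 0 z) ^ 2) ^ p * ((η 0 z) ^ 2) ^ p) P := by
    rw [hprod]; exact hcint 0
  have hSmeas : Measurable (fun z => ((σ 0 z) ^ 2) ^ p) :=
    ((hσmeas 0).pow_const 2).pow_const p
  have hYne : ¬ (fun z => ((η 0 z) ^ 2) ^ p) =ᵐ[P] 0 := by
    intro h
    have h2 : (fun z => (η 0 z) ^ 2) =ᵐ[P] 0 := by
      filter_upwards [h] with z hz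
      simp only [Pi.zero_apply] at hz ⊢
      exact pow_eq_zero_iff hp0 |>.mp hz
    have hv := hvar 0
    rw [integral_congr_ae h2] at hv
    simp at hv
  have hXint : Integrable (fun z => ((σ 0 z) ^ 2) ^ p) P := by
    refine hIF2.integrable_left_of_integrable_op (· * ·) 1 one_ne_zero
      (fun x y => by simp [enorm_mul]) ?_ hSmeas.aestronglyMeasurable
      hμ2p.aestronglyMeasurable hYne
    exact hprodint
  have hfact : c = (∫ z, ((σ 0 z) ^ 2) ^ p ∂P) * μ := by
    rw [← hc 0, ← hprod, hμdef]
    exact hIF2.integral_fun_mul_eq_mul_integral hXint.aestronglyMeasurable hμ2p.aestronglyMeasurable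
  -- pointwise lower bound for ((σ 0 z)^2)^p
  have hlb : ∀ z, ω ^ p + α ^ p * (ε (0 - 1) z) ^ (2 * p) * χ z ≤ ((σ 0 z) ^ 2) ^ p := by
    intro z
    rw [hvol 0 z]
    have h2 : ω ^ p + α ^ p * (ε (0 - 1) z) ^ (2 * p) * χ z =
        ω ^ p + (α * (ε (0 - 1) z) ^ 2 *
          (if k * (ε (0 - 2) z) ^ 2 < (ε (0 - 1) z) ^ 2 then 1 else 0)) ^ p := by
      simp only [hχdef]
      split
      · rw [mul_one, mul_one, mul_pow, pow_mul]
      · rw [mul_zero, mul_zero, zero_pow hp0]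
    rw [h2]
    refine pow_add_pow_le (le_of_lt hω) ?_ hp0
    have := (hχ01 z).1
    simp only [hχdef] at this ⊢
    split <;> positivity
  have hχint : Integrable (fun z => (ε (0 - 1) z) ^ (2 * p) * χ z) P := by
    refine (hcint (0 - 1)).mono
      (((hεmeas _).pow_const _  |>.mul hχmeas).aestronglyMeasurable)
      (ae_of_all _ fun z => ?_)
    have h1 : 0 ≤ (ε (0 - 1) z) ^ (2 * p) := by
      rw [pow_mul]; exact pow_nonneg (sq_nonneg _) p
    rw [Real.norm_eq_abs, Real.norm_eq_abs, abs_of_nonneg h1,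
      abs_of_nonneg (mul_nonneg h1 (hχ01 z).1)]
    nlinarith [(hχ01 z).1, (hχ01 z).2]
  have hglb : ω ^ p + α ^ p * ∫ z, (ε (0 - 1) z) ^ (2 * p) * χ z ∂P ≤
      ∫ z, ((σ 0 z) ^ 2) ^ p ∂P := by
    have h1 : Integrable (fun z => ω ^ p + α ^ p * ((ε (0 - 1) z) ^ (2 * p) * χ z)) P :=
      (integrable_const _).add (hχint.const_mul _)
    have h2 := integral_mono h1 hXint (fun z => by
      have := hlb z; rw [mul_assoc] at this; exact this)
    rwa [integral_add (integrable_const _) (hχint.const_mul _), integral_const,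
      integral_const_mul, probReal_univ, smul_eq_mul, one_mul] at h2
  -- lower bound for the truncated moment
  have hcompl : ∫ z, (ε (0 - 1) z) ^ (2 * p) * (1 - χ z) ∂P ≤ k ^ p * c := by
    have hcc : Integrable (fun z => (ε (0 - 1) z) ^ (2 * p) * (1 - χ z)) P := by
      have : (fun z => (ε (0 - 1) z) ^ (2 * p) * (1 - χ z)) =
          fun z => (ε (0 - 1) z) ^ (2 * p) - (ε (0 - 1) z) ^ (2 * p) * χ z := by
        funext z; ring
      rw [this]; exact (hcint _).sub hχint
    have hb : ∀ z, (ε (0 - 1) z) ^ (2 * p) * (1 - χ z) ≤ k ^ p * (ε (0 - 2) z) ^ (2 * p) := by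
      intro z
      simp only [hχdef]
      by_cases h : k * (ε (0 - 2) z) ^ 2 < (ε (0 - 1) z) ^ 2
      · rw [if_pos h, sub_self, mul_zero]
        have h1 : 0 ≤ (ε (0 - 2) z) ^ (2 * p) := by
          rw [pow_mul]; exact pow_nonneg (sq_nonneg _) p
        positivity
      · push_neg at h
        rw [if_neg (not_lt.mpr h), sub_zero, mul_one, pow_mul, pow_mul, ← mul_pow]
        exact pow_le_pow_left₀ (sq_nonneg _) h p
    have h2 := integral_mono hcc ((hcint (0 - 2)).const_mul (k ^ p)) hb
    rwa [integral_const_mul, hc (0 - 2)] at h2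
  have htrunc : (1 - k ^ p) * c ≤ ∫ z, (ε (0 - 1) z) ^ (2 * p) * χ z ∂P := by
    have hsub : ∫ z, (ε (0 - 1) z) ^ (2 * p) * (1 - χ z) ∂P =
        c - ∫ z, (ε (0 - 1) z) ^ (2 * p) * χ z ∂P := by
      have : (fun z => (ε (0 - 1) z) ^ (2 * p) * (1 - χ z)) =
          fun z => (ε (0 - 1) z) ^ (2 * p) - (ε (0 - 1) z) ^ (2 * p) * χ z := by
        funext z; ring
      rw [this, integral_sub (hcint _) hχint, hc (0 - 1)]
    rw [hsub] at hcompl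
    linarith
  -- combine
  have hS : ∫ z, ((σ 0 z) ^ 2) ^ p ∂P ≥ ω ^ p + α ^ p * ((1 - k ^ p) * c) := by
    have := mul_le_mul_of_nonneg_left htrunc (pow_nonneg hα p)
    linarith
  have hmain : μ * ω ^ p + μ * α ^ p * (1 - k ^ p) * c ≤ c := by
    calc μ * ω ^ p + μ * α ^ p * (1 - k ^ p) * c
        = (ω ^ p + α ^ p * ((1 - k ^ p) * c)) * μ := by ring
      _ ≤ (∫ z, ((σ 0 z) ^ 2) ^ p ∂P) * μ := mul_le_mul_of_nonneg_right hS hμ0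
      _ = c := hfact.symm
  have hωp : 0 < ω ^ p := pow_pos hω p
  have hq0 : 0 ≤ μ * α ^ p * (1 - k ^ p) :=
    mul_nonneg (mul_nonneg hμ0 (pow_nonneg hα p)) (by linarith)
  have hqlt : μ * α ^ p * (1 - k ^ p) < 1 := by
    by_contra hcon
    push_neg at hcon
    have hμz : μ ≤ 0 := by nlinarith
    have : μ = 0 := le_antisymm hμz hμ0
    rw [this] at hcon
    norm_num at hcon
  refine ⟨hqlt, ?_⟩
  rw [div_le_iff₀ (by linarith)]
  nlinarith
end
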